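/- arXiv:2008.01020 — 10 statements merged into one kernel-verified Lean document; each statement's English description precedes it below -/
import Mathlib

section
/- Let N ≥ 1 and let χ¹, χ² be the vanishing-order sequences of two partitions of N. Then the nodal sequence χ_k := max(1, χ¹_k + χ²_k − k) is nondecreasing on {1,…,N}. -/
/-- `p` (with parts indexed from 1) is a partition of `N`: the parts are
nonincreasing, sum to `N`, and vanish beyond index `N`. -/
def IsPartitionOf (N : ℕ) (p : ℕ → ℕ) : Prop :=
  (∀ i, 1 ≤ i → p (i + 1) ≤ p i) ∧
  (∑ j ∈ Finset.Icc 1 N, p j = N) ∧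
  (∀ i, N < i → p i = 0)

/-- The vanishing order at `k` of the partition `p`: the least positive
integer `i` such that `p 1 + ⋯ + p i ≥ k`. -/
noncomputable def chiOf (p : ℕ → ℕ) (k : ℕ) : ℕ :=
  sInf {i | 1 ≤ i ∧ k ≤ ∑ j ∈ Finset.Icc 1 i, p j}

/-- `χ` is the vanishing-order sequence, on `{1,…,N}`, of the partition `p` of `N`. -/
def IsVanishingOrderSeq (N : ℕ) (p : ℕ → ℕ) (χ : ℕ → ℕ) : Prop :=
  IsPartitionOf N p ∧ ∀ k, 1 ≤ k → k ≤ N → χ k = chiOf p k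

private lemma part_anti {N : ℕ} {p : ℕ → ℕ} (hp : IsPartitionOf N p)
    {i j : ℕ} (hi : 1 ≤ i) (hij : i ≤ j) : p j ≤ p i := by
  induction j, hij using Nat.le_induction with
  | base => exact le_rfl
  | succ j hj ih => exact le_trans (hp.1 j (by omega)) ih

private lemma chiOf_spec {N : ℕ} {p : ℕ → ℕ} (hp : IsPartitionOf N p)
    {k : ℕ} (hk1 : 1 ≤ k) (hkN : k ≤ N) :
    1 ≤ chiOf p k ∧ k ≤ ∑ j ∈ Finset.Icc 1 (chiOf p k), p j := by
  have hmem : N ∈ {i | 1 ≤ i ∧ k ≤ ∑ j ∈ Finset.Icc 1 i, p j} := by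
    refine ⟨le_trans hk1 hkN, ?_⟩
    rw [hp.2.1]; exact hkN
  exact Nat.sInf_mem ⟨N, hmem⟩

private lemma chiOf_mono {N : ℕ} {p : ℕ → ℕ} (hp : IsPartitionOf N p)
    {k k' : ℕ} (hk1 : 1 ≤ k) (hkk' : k ≤ k') (hk'N : k' ≤ N) :
    chiOf p k ≤ chiOf p k' := by
  have h := chiOf_spec hp (le_trans hk1 hkk') hk'N
  exact Nat.sInf_le ⟨h.1, le_trans hkk' h.2⟩

private lemma sum_lt_of_lt_chiOf {p : ℕ → ℕ} {k i : ℕ} (hi : 1 ≤ i)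
    (h : i < chiOf p k) : ∑ j ∈ Finset.Icc 1 i, p j < k := by
  by_contra hc
  push_neg at hc
  have : chiOf p k ≤ i :=
    Nat.sInf_le (show i ∈ {i | 1 ≤ i ∧ k ≤ ∑ j ∈ Finset.Icc 1 i, p j} from ⟨hi, hc⟩)
  omega

private lemma two_mul_chi_le {N : ℕ} {p : ℕ → ℕ} (hp : IsPartitionOf N p)
    {k : ℕ} (hk1 : 1 ≤ k) (hkN : k + 1 ≤ N)
    (heq : chiOf p k = chiOf p (k + 1)) : 2 * chiOf p k ≤ k + 1 := by
  set a := chiOf p k with ha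
  have hspec := chiOf_spec hp hk1 (by omega)
  have hspec' := chiOf_spec hp (k := k + 1) (by omega) hkN
  rcases Nat.lt_or_ge a 2 with h2 | h2
  · omega
  · -- S (a-1) < k and S a ≥ k+1, so p a ≥ 2
    have hlt : ∑ j ∈ Finset.Icc 1 (a - 1), p j < k :=
      sum_lt_of_lt_chiOf (by omega) (by omega)
    have hSa : k + 1 ≤ ∑ j ∈ Finset.Icc 1 a, p j := by
      rw [heq] at *; exact hspec'.2
    have hsplit : ∑ j ∈ Finset.Icc 1 a, p j = (∑ j ∈ Finset.Icc 1 (a - 1), p j) + p a := by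
      have h := Finset.sum_Icc_succ_top (a := 1) (b := a - 1) (f := p) (by omega)
      rw [show a - 1 + 1 = a from by omega] at h
      exact h
    have hpa : 2 ≤ p a := by omega
    have hbound : 2 * (a - 1) ≤ ∑ j ∈ Finset.Icc 1 (a - 1), p j := by
      calc 2 * (a - 1) = ∑ j ∈ Finset.Icc 1 (a - 1), 2 := by
            rw [Finset.sum_const, smul_eq_mul, Nat.card_Icc]; omega
        _ ≤ ∑ j ∈ Finset.Icc 1 (a - 1), p j := by
            refine Finset.sum_le_sum fun j hj => ?_
            simp only [Finset.mem_Icc] at hj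
            exact le_trans hpa (part_anti hp hj.1 (by omega))
    omega

/-- the nodal sequence `max(1, χ¹_k + χ²_k − k)` is nondecreasing. -/
theorem nodal_sequence_monotone
    (N : ℕ) (hN : 1 ≤ N) (p₁ p₂ χ₁ χ₂ : ℕ → ℕ)
    (h1 : IsVanishingOrderSeq N p₁ χ₁)
    (h2 : IsVanishingOrderSeq N p₂ χ₂) :
    ∀ k k', 1 ≤ k → k ≤ k' → k' ≤ N →
      max 1 ((χ₁ k : ℤ) + (χ₂ k : ℤ) - (k : ℤ)) ≤
        max 1 ((χ₁ k' : ℤ) + (χ₂ k' : ℤ) - (k' : ℤ)) := by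
  obtain ⟨hp1, hχ1⟩ := h1
  obtain ⟨hp2, hχ2⟩ := h2
  have step : ∀ k, 1 ≤ k → k + 1 ≤ N →
      max 1 ((χ₁ k : ℤ) + (χ₂ k : ℤ) - (k : ℤ)) ≤
        max 1 ((χ₁ (k + 1) : ℤ) + (χ₂ (k + 1) : ℤ) - ((k + 1 : ℕ) : ℤ)) := by
    intro k hk1 hkN
    rw [hχ1 k hk1 (by omega), hχ2 k hk1 (by omega),
        hχ1 (k + 1) (by omega) hkN, hχ2 (k + 1) (by omega) hkN]
    have m1 : chiOf p₁ k ≤ chiOf p₁ (k + 1) := chiOf_mono hp1 hk1 (by omega) hkN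
    have m2 : chiOf p₂ k ≤ chiOf p₂ (k + 1) := chiOf_mono hp2 hk1 (by omega) hkN
    by_cases hc : chiOf p₁ k = chiOf p₁ (k + 1) ∧ chiOf p₂ k = chiOf p₂ (k + 1)
    · have t1 := two_mul_chi_le hp1 hk1 hkN hc.1
      have t2 := two_mul_chi_le hp2 hk1 hkN hc.2
      have hle : (chiOf p₁ k : ℤ) + (chiOf p₂ k : ℤ) - (k : ℤ) ≤ 1 := by
        push_cast; omega
      calc max 1 ((chiOf p₁ k : ℤ) + (chiOf p₂ k : ℤ) - (k : ℤ)) = 1 :=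
            max_eq_left hle
        _ ≤ _ := le_max_left _ _
    · have hsum : chiOf p₁ k + chiOf p₂ k + 1 ≤ chiOf p₁ (k + 1) + chiOf p₂ (k + 1) := by
        omega
      refine max_le_max le_rfl ?_
      push_cast
      omega
  intro k k' hk hkk' hk'N
  induction k', hkk' using Nat.le_induction with
  | base => exact le_rfl
  | succ k' hkk' ih =>
      exact le_trans (ih (by omega)) (step k' (by omega) hk'N)
end

section
/- Let N ≥ 2 and let χ¹, χ² be the vanishing-order sequences of two nonzero partitions of N. Then the nodal sequence χ_k := max(1, χ¹_k + χ²_k − k), k ∈ {1,…,N}, is itself the vanishing-order sequence of some partition of N; that is, χ is nondecreasing, χ₁ = 1, and the multiplicity function i ↦ #{k ∈ {1,…,N} : χ_k = i} is nonincreasing on positive integers i. -/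
namespace Nodal

/-- partial sums -/
def S (p : ℕ → ℕ) (a : ℕ) : ℕ := ∑ j ∈ Finset.Icc 1 a, p j

lemma S_mono (p : ℕ → ℕ) : Monotone (S p) := fun a b h =>
  Finset.sum_le_sum_of_subset (Finset.Icc_subset_Icc_right h)

lemma S_split (p : ℕ → ℕ) {a b : ℕ} (hab : a ≤ b) :
    S p a + ∑ j ∈ Finset.Ioc a b, p j = S p b := by
  rw [S, S, show (1:ℕ) = (0:ℕ) + 1 from rfl, Finset.Icc_add_one_left_eq_Ioc, Finset.Icc_add_one_left_eq_Ioc]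
  exact Finset.sum_Ioc_consecutive p (Nat.zero_le a) hab

lemma parts_anti {N : ℕ} {p : ℕ → ℕ} (hp : IsPartitionOf N p) {i j : ℕ}
    (hi : 1 ≤ i) (hij : i ≤ j) : p j ≤ p i := by
  induction j, hij using Nat.le_induction with
  | base => exact le_rfl
  | succ n hn ih => exact le_trans (hp.1 n (le_trans hi hn)) ih

lemma N_le_S_of_zero {N : ℕ} {p : ℕ → ℕ} (hp : IsPartitionOf N p) {a : ℕ}
    (ha : 1 ≤ a) (h0 : p a = 0) : N ≤ S p a := by
  rcases le_or_gt a N with h | h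
  · have hs : S p a + ∑ j ∈ Finset.Ioc a N, p j = S p N := S_split p h
    have : ∑ j ∈ Finset.Ioc a N, p j = 0 := by
      apply Finset.sum_eq_zero
      intro j hj
      have := parts_anti hp ha (le_of_lt (Finset.mem_Ioc.mp hj).1)
      omega
    have hN : S p N = N := hp.2.1
    omega
  · have := S_mono p h.le
    have hN : S p N = N := hp.2.1
    omega

lemma le_S_self {N : ℕ} {p : ℕ → ℕ} (hp : IsPartitionOf N p) {k : ℕ} (hk : k ≤ N) :
    k ≤ S p k := by
  rcases Nat.eq_zero_or_pos k with rfl | hk1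
  · exact Nat.zero_le _
  rcases Nat.eq_zero_or_pos (p k) with h0 | h1
  · exact le_trans hk (N_le_S_of_zero hp hk1 h0)
  · calc k = (Finset.Icc 1 k).card • 1 := by simp [Nat.card_Icc]
      _ ≤ ∑ j ∈ Finset.Icc 1 k, p j := by
        apply Finset.card_nsmul_le_sum
        intro x hx
        have hx' := Finset.mem_Icc.mp hx
        have := parts_anti hp hx'.1 hx'.2
        omega

/-- basic spec of chiOf -/
lemma chiOf_mem {N : ℕ} {p : ℕ → ℕ} (hp : IsPartitionOf N p) {k : ℕ}
    (h1 : 1 ≤ k) (h2 : k ≤ N) :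
    1 ≤ chiOf p k ∧ k ≤ S p (chiOf p k) :=
  Nat.sInf_mem (s := {i | 1 ≤ i ∧ k ≤ S p i}) ⟨k, h1, le_S_self hp h2⟩

lemma chiOf_le {p : ℕ → ℕ} {k a : ℕ} (ha : 1 ≤ a) (hka : k ≤ S p a) :
    chiOf p k ≤ a := Nat.sInf_le ⟨ha, hka⟩

lemma S_pred_lt {p : ℕ → ℕ} {k : ℕ} (h1 : 1 ≤ k) :
    S p (chiOf p k - 1) < k := by
  rcases Nat.lt_or_ge (chiOf p k) 2 with h | h
  · have : S p (chiOf p k - 1) = 0 := by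
      have : chiOf p k - 1 = 0 := by omega
      rw [this]; simp [S]
    omega
  · have hne : chiOf p k - 1 < chiOf p k := by omega
    have := Nat.notMem_of_lt_sInf (s := {i | 1 ≤ i ∧ k ≤ S p i}) hne
    simp only [Set.mem_setOf_eq, not_and, not_le] at this
    exact this (by omega)

/-- chiOf monotone in k -/
lemma chiOf_mono {N : ℕ} {p : ℕ → ℕ} (hp : IsPartitionOf N p) {k k' : ℕ}
    (h1 : 1 ≤ k) (hk : k ≤ k') (h2 : k' ≤ N) : chiOf p k ≤ chiOf p k' := by
  obtain ⟨hc1, hc2⟩ := chiOf_mem hp (le_trans h1 hk) h2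
  exact chiOf_le hc1 (le_trans hk hc2)

lemma chiOf_le_self {N : ℕ} {p : ℕ → ℕ} (hp : IsPartitionOf N p) {k : ℕ}
    (h1 : 1 ≤ k) (h2 : k ≤ N) : chiOf p k ≤ k :=
  chiOf_le h1 (le_S_self hp h2)

/-- step at most one -/
lemma chiOf_step {N : ℕ} {p : ℕ → ℕ} (hp : IsPartitionOf N p) {k : ℕ}
    (h1 : 1 ≤ k) (h2 : k + 1 ≤ N) : chiOf p (k + 1) ≤ chiOf p k + 1 := by
  obtain ⟨hc1, hc2⟩ := chiOf_mem hp h1 (by omega)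
  set c := chiOf p k with hc
  rcases Nat.eq_zero_or_pos (p (c+1)) with h0 | hpos
  · exact chiOf_le (by omega) (le_trans h2 (N_le_S_of_zero hp (by omega) h0))
  · apply chiOf_le (by omega)
    have h3 := S_split p (show c ≤ c + 1 by omega)
    have h4 : ∑ j ∈ Finset.Ioc c (c+1), p j = p (c+1) := by
      rw [show Finset.Ioc c (c+1) = {c+1} by
        ext x; simp only [Finset.mem_Ioc, Finset.mem_singleton]; omega]
      simp
    omega


lemma S_zero (p : ℕ → ℕ) : S p 0 = 0 := by simp [S]

lemma seg_lower {N : ℕ} {p : ℕ → ℕ} (hp : IsPartitionOf N p) {a b : ℕ}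
    (hab : a ≤ b) (hb : 1 ≤ b) : (b - a) * p b ≤ ∑ j ∈ Finset.Ioc a b, p j := by
  have h := Finset.card_nsmul_le_sum (Finset.Ioc a b) p (p b) ?_
  · simpa [Nat.card_Ioc, smul_eq_mul] using h
  · intro x hx
    obtain ⟨hx1, hx2⟩ := Finset.mem_Ioc.mp hx
    exact parts_anti hp (by omega) hx2

lemma seg_upper {N : ℕ} {p : ℕ → ℕ} (hp : IsPartitionOf N p) {a b : ℕ}
    (hab : a ≤ b) : ∑ j ∈ Finset.Ioc a b, p j ≤ (b - a) * p (a + 1) := by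
  have h := Finset.sum_le_card_nsmul (Finset.Ioc a b) p (p (a+1)) ?_
  · simpa [Nat.card_Ioc, smul_eq_mul] using h
  · intro x hx
    obtain ⟨hx1, hx2⟩ := Finset.mem_Ioc.mp hx
    exact parts_anti hp (by omega) (by omega)

lemma one_le_p1 {N : ℕ} {p : ℕ → ℕ} (hp : IsPartitionOf N p) (hN : 1 ≤ N) :
    1 ≤ p 1 := by
  by_contra h
  have h0 : p 1 = 0 := by omega
  have h2 := N_le_S_of_zero hp le_rfl h0
  have : S p 1 = p 1 := by simp [S]
  omega

lemma chiOf_one {N : ℕ} {p : ℕ → ℕ} (hp : IsPartitionOf N p) (hN : 1 ≤ N) :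
    chiOf p 1 = 1 := by
  have h1 := chiOf_le (p := p) (k := 1) le_rfl (by
    have : S p 1 = p 1 := by simp [S]
    have := one_le_p1 hp hN
    omega)
  have h2 := (chiOf_mem hp le_rfl hN).1
  omega

/-- The nodal sequence, in ℕ. -/
noncomputable def chin (p₁ p₂ : ℕ → ℕ) (k : ℕ) : ℕ :=
  max 1 (chiOf p₁ k + chiOf p₂ k - k)

section TwoPartitions

variable {N : ℕ} {p₁ p₂ : ℕ → ℕ}

lemma chin_one (h1 : IsPartitionOf N p₁) (h2 : IsPartitionOf N p₂) (hN : 1 ≤ N) :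
    chin p₁ p₂ 1 = 1 := by
  rw [chin, chiOf_one h1 hN, chiOf_one h2 hN]
  simp

lemma one_le_chin (k : ℕ) : 1 ≤ chin p₁ p₂ k := le_max_left _ _

lemma chin_le_self (h1 : IsPartitionOf N p₁) (h2 : IsPartitionOf N p₂) {k : ℕ}
    (hk : 1 ≤ k) (hkN : k ≤ N) : chin p₁ p₂ k ≤ k := by
  have ha := chiOf_le_self h1 hk hkN
  have hb := chiOf_le_self h2 hk hkN
  rw [chin]; omega

lemma chin_step (h1 : IsPartitionOf N p₁) (h2 : IsPartitionOf N p₂) {k : ℕ}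
    (hk : 1 ≤ k) (hk2 : k + 1 ≤ N) :
    chin p₁ p₂ (k + 1) ≤ chin p₁ p₂ k + 1 := by
  have ha := chiOf_step h1 hk hk2
  have hb := chiOf_step h2 hk hk2
  rw [chin, chin]; omega

lemma chin_mono_step (h1 : IsPartitionOf N p₁) (h2 : IsPartitionOf N p₂) {k : ℕ}
    (hk : 1 ≤ k) (hk2 : k + 1 ≤ N) :
    chin p₁ p₂ k ≤ chin p₁ p₂ (k + 1) := by
  by_contra hcon
  push_neg at hcon
  rw [chin, chin] at hcon
  have ha := chiOf_mem h1 hk (by omega)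
  have hb := chiOf_mem h2 hk (by omega)
  have ha' := chiOf_mem h1 (show 1 ≤ k+1 by omega) hk2
  have hb' := chiOf_mem h2 (show 1 ≤ k+1 by omega) hk2
  have hma : chiOf p₁ k ≤ chiOf p₁ (k+1) := chiOf_mono h1 hk (by omega) hk2
  have hmb : chiOf p₂ k ≤ chiOf p₂ (k+1) := chiOf_mono h2 hk (by omega) hk2
  -- flatness of both
  have hflat1 : chiOf p₁ (k+1) = chiOf p₁ k := by omega
  have hflat2 : chiOf p₂ (k+1) = chiOf p₂ k := by omega
  have hchik : k + 2 ≤ chiOf p₁ k + chiOf p₂ k := by omega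
  -- then S p₁ a ≥ k+1 and S p₁ (a-1) < k forces p₁ a ≥ 2
  have hSa : k + 1 ≤ S p₁ (chiOf p₁ k) := by rw [← hflat1]; exact ha'.2
  have hSa' : S p₁ (chiOf p₁ k - 1) < k := S_pred_lt hk
  have hSb : k + 1 ≤ S p₂ (chiOf p₂ k) := by rw [← hflat2]; exact hb'.2
  have hSb' : S p₂ (chiOf p₂ k - 1) < k := S_pred_lt hk
  have key : ∀ (p : ℕ → ℕ), IsPartitionOf N p → 1 ≤ chiOf p k →
      k + 1 ≤ S p (chiOf p k) → S p (chiOf p k - 1) < k →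
      2 * (chiOf p k - 1) < k := by
    intro p hp hc1 hS hS'
    have hpa2 : 2 ≤ p (chiOf p k) := by
      have hsplit := S_split p (show chiOf p k - 1 ≤ chiOf p k by omega)
      have hsum : ∑ j ∈ Finset.Ioc (chiOf p k - 1) (chiOf p k), p j = p (chiOf p k) := by
        rw [show Finset.Ioc (chiOf p k - 1) (chiOf p k) = {chiOf p k} by
          ext x; simp only [Finset.mem_Ioc, Finset.mem_singleton]; omega]
        simp
      omega
    rcases Nat.eq_zero_or_pos (chiOf p k - 1) with h0 | hpos
    · omega
    · have hseg := seg_lower hp (a := 0) (b := chiOf p k - 1) (by omega) hpos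
      have hle : 2 ≤ p (chiOf p k - 1) :=
        le_trans hpa2 (parts_anti hp hpos (by omega))
      have heq : S p (chiOf p k - 1) = ∑ j ∈ Finset.Ioc 0 (chiOf p k - 1), p j := by
        rw [S, show (1:ℕ) = (0:ℕ) + 1 from rfl, Finset.Icc_add_one_left_eq_Ioc]
      have hmul : 2 * (chiOf p k - 1) ≤ (chiOf p k - 1 - 0) * p (chiOf p k - 1) := by
        have h' : chiOf p k - 1 - 0 = chiOf p k - 1 := by omega
        rw [h', Nat.mul_comm]
        exact Nat.mul_le_mul_left _ hle
      omega
  have hka := key p₁ h1 ha.1 hSa hSa'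
  have hkb := key p₂ h2 hb.1 hSb hSb'
  omega

lemma chin_mono (h1 : IsPartitionOf N p₁) (h2 : IsPartitionOf N p₂) {k k' : ℕ}
    (hk : 1 ≤ k) (hkk : k ≤ k') (hk2 : k' ≤ N) :
    chin p₁ p₂ k ≤ chin p₁ p₂ k' := by
  induction k', hkk using Nat.le_induction with
  | base => exact le_rfl
  | succ n hn ih =>
    exact le_trans (ih (by omega)) (chin_mono_step h1 h2 (by omega) hk2)

lemma transition (h1 : IsPartitionOf N p₁) (h2 : IsPartitionOf N p₂) {k : ℕ}
    (hk : 1 ≤ k) (hk2 : k + 1 ≤ N)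
    (hjump : chin p₁ p₂ (k + 1) = chin p₁ p₂ k + 1) :
    S p₁ (chiOf p₁ k) = k ∧ S p₂ (chiOf p₂ k) = k ∧
    chiOf p₁ k + chiOf p₂ k = k + chin p₁ p₂ k := by
  have ha := chiOf_mem h1 hk (by omega)
  have hb := chiOf_mem h2 hk (by omega)
  have ha' := chiOf_mem h1 (show 1 ≤ k+1 by omega) hk2
  have hb' := chiOf_mem h2 (show 1 ≤ k+1 by omega) hk2
  have hma : chiOf p₁ k ≤ chiOf p₁ (k+1) := chiOf_mono h1 hk (by omega) hk2
  have hmb : chiOf p₂ k ≤ chiOf p₂ (k+1) := chiOf_mono h2 hk (by omega) hk2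
  have hsa := chiOf_step h1 hk hk2
  have hsb := chiOf_step h2 hk hk2
  have hinc1 : chiOf p₁ (k+1) = chiOf p₁ k + 1 := by rw [chin, chin] at hjump; omega
  have hinc2 : chiOf p₂ (k+1) = chiOf p₂ k + 1 := by rw [chin, chin] at hjump; omega
  have hS1 : S p₁ (chiOf p₁ k) = k := by
    have := S_pred_lt (p := p₁) (k := k+1) (by omega)
    rw [hinc1] at this
    simp only [Nat.add_sub_cancel] at this
    exact le_antisymm (by omega) ha.2
  have hS2 : S p₂ (chiOf p₂ k) = k := by
    have := S_pred_lt (p := p₂) (k := k+1) (by omega)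
    rw [hinc2] at this
    simp only [Nat.add_sub_cancel] at this
    exact le_antisymm (by omega) hb.2
  refine ⟨hS1, hS2, ?_⟩
  rw [chin, chin] at hjump
  rw [chin]
  omega


/-- number of k in [1,N] with chin k ≤ i -/
noncomputable def T (N : ℕ) (p₁ p₂ : ℕ → ℕ) (i : ℕ) : ℕ :=
  ((Finset.Icc 1 N).filter (fun k => chin p₁ p₂ k ≤ i)).card

/-- the multiplicity function: the candidate partition -/
noncomputable def q (N : ℕ) (p₁ p₂ : ℕ → ℕ) (i : ℕ) : ℕ :=
  ((Finset.Icc 1 N).filter (fun k => chin p₁ p₂ k = i)).card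

lemma T_zero : T N p₁ p₂ 0 = 0 := by
  rw [T, Finset.card_eq_zero, Finset.filter_eq_empty_iff]
  intro k _
  have := one_le_chin (p₁ := p₁) (p₂ := p₂) k
  omega

lemma T_le_N (i : ℕ) : T N p₁ p₂ i ≤ N := by
  calc T N p₁ p₂ i ≤ (Finset.Icc 1 N).card := Finset.card_filter_le _ _
    _ = N := by rw [Nat.card_Icc]; omega

lemma T_succ (i : ℕ) : T N p₁ p₂ (i + 1) = T N p₁ p₂ i + q N p₁ p₂ (i + 1) := by
  rw [T, T, q]
  rw [show (Finset.Icc 1 N).filter (fun k => chin p₁ p₂ k ≤ i + 1)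
      = (Finset.Icc 1 N).filter (fun k => chin p₁ p₂ k ≤ i)
        ∪ (Finset.Icc 1 N).filter (fun k => chin p₁ p₂ k = i + 1) by
    ext x
    simp only [Finset.mem_union, Finset.mem_filter]
    constructor
    · rintro ⟨hx, hc⟩
      rcases Nat.lt_or_ge (chin p₁ p₂ x) (i+1) with h | h
      · exact Or.inl ⟨hx, by omega⟩
      · exact Or.inr ⟨hx, by omega⟩
    · rintro (⟨hx, hc⟩ | ⟨hx, hc⟩) <;> exact ⟨hx, by omega⟩]
  apply Finset.card_union_of_disjoint
  rw [Finset.disjoint_left]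
  intro x hx hx'
  obtain ⟨_, h⟩ := Finset.mem_filter.mp hx
  obtain ⟨_, h'⟩ := Finset.mem_filter.mp hx'
  omega

lemma T_char (h1 : IsPartitionOf N p₁) (h2 : IsPartitionOf N p₂) {k i : ℕ}
    (hk : 1 ≤ k) (hkN : k ≤ N) :
    k ≤ T N p₁ p₂ i ↔ chin p₁ p₂ k ≤ i := by
  constructor
  · intro hT
    by_contra hc
    push_neg at hc
    have hsub : (Finset.Icc 1 N).filter (fun k' => chin p₁ p₂ k' ≤ i)
        ⊆ Finset.Icc 1 (k - 1) := by
      intro x hx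
      obtain ⟨hx1, hx2⟩ := Finset.mem_filter.mp hx
      obtain ⟨hx3, hx4⟩ := Finset.mem_Icc.mp hx1
      rcases Nat.lt_or_ge x k with h | h
      · exact Finset.mem_Icc.mpr ⟨hx3, by omega⟩
      · exact absurd (chin_mono h1 h2 hk h hx4) (by omega)
    have := Finset.card_le_card hsub
    rw [Nat.card_Icc] at this
    rw [T] at hT
    omega
  · intro hc
    have hsub : Finset.Icc 1 k ⊆ (Finset.Icc 1 N).filter (fun k' => chin p₁ p₂ k' ≤ i) := by
      intro x hx
      obtain ⟨hx1, hx2⟩ := Finset.mem_Icc.mp hx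
      refine Finset.mem_filter.mpr ⟨Finset.mem_Icc.mpr ⟨hx1, by omega⟩, ?_⟩
      exact le_trans (chin_mono h1 h2 hx1 hx2 hkN) hc
    have := Finset.card_le_card hsub
    rw [Nat.card_Icc] at this
    rw [T]
    omega

lemma T_sum (h1 : IsPartitionOf N p₁) (h2 : IsPartitionOf N p₂) (i : ℕ) :
    T N p₁ p₂ i = ∑ j ∈ Finset.Icc 1 i, q N p₁ p₂ j := by
  rw [T]
  rw [Finset.card_eq_sum_card_fiberwise
    (f := chin p₁ p₂) (t := Finset.Icc 1 i) ?_]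
  · apply Finset.sum_congr rfl
    intro j hj
    obtain ⟨hj1, hj2⟩ := Finset.mem_Icc.mp hj
    rw [q, Finset.filter_filter]
    congr 1
    apply Finset.filter_congr
    intro x _
    constructor
    · rintro ⟨h, h'⟩; exact h'
    · intro h; exact ⟨by omega, h⟩
  · intro x hx
    obtain ⟨hx1, hx2⟩ := Finset.mem_filter.mp hx
    exact Finset.mem_Icc.mpr ⟨one_le_chin x, hx2⟩

lemma T_N (h1 : IsPartitionOf N p₁) (h2 : IsPartitionOf N p₂) :
    T N p₁ p₂ N = N := by
  rw [T, Finset.filter_true_of_mem, Nat.card_Icc]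
  · omega
  · intro x hx
    obtain ⟨hx1, hx2⟩ := Finset.mem_Icc.mp hx
    exact le_trans (chin_le_self h1 h2 hx1 hx2) hx2

lemma q_sum (h1 : IsPartitionOf N p₁) (h2 : IsPartitionOf N p₂) :
    ∑ j ∈ Finset.Icc 1 N, q N p₁ p₂ j = N := by
  rw [← T_sum h1 h2, T_N h1 h2]

lemma q_vanish (h1 : IsPartitionOf N p₁) (h2 : IsPartitionOf N p₂) {i : ℕ}
    (hi : N < i) : q N p₁ p₂ i = 0 := by
  rw [q, Finset.card_eq_zero, Finset.filter_eq_empty_iff]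
  intro k hk
  obtain ⟨hk1, hk2⟩ := Finset.mem_Icc.mp hk
  have := chin_le_self h1 h2 hk1 hk2
  omega

lemma chiOf_q (h1 : IsPartitionOf N p₁) (h2 : IsPartitionOf N p₂) {k : ℕ}
    (hk : 1 ≤ k) (hkN : k ≤ N) :
    chiOf (q N p₁ p₂) k = chin p₁ p₂ k := by
  have hset : {i | 1 ≤ i ∧ k ≤ ∑ j ∈ Finset.Icc 1 i, q N p₁ p₂ j}
      = {i | 1 ≤ i ∧ k ≤ T N p₁ p₂ i} := by
    ext i
    simp only [Set.mem_setOf_eq, ← T_sum h1 h2]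
  rw [chiOf, hset]
  apply le_antisymm
  · exact Nat.sInf_le ⟨one_le_chin k, (T_char h1 h2 hk hkN).mpr le_rfl⟩
  · have hne : {i | 1 ≤ i ∧ k ≤ T N p₁ p₂ i}.Nonempty :=
      ⟨chin p₁ p₂ k, one_le_chin k, (T_char h1 h2 hk hkN).mpr le_rfl⟩
    obtain ⟨hm1, hm2⟩ := Nat.sInf_mem hne
    exact (T_char h1 h2 hk hkN).mp hm2


lemma mul_trick {D1 D2 a1 a2 u u' s t : ℕ} (h1 : a1 * u ≤ s) (hs : s = D1)
    (h2 : D2 ≤ t) (h3 : t ≤ a2 * u') (h4 : u' ≤ u) : D2 * a1 ≤ a2 * D1 := by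
  calc D2 * a1 ≤ (a2 * u') * a1 := Nat.mul_le_mul_right _ (le_trans h2 h3)
    _ ≤ (a2 * u) * a1 := Nat.mul_le_mul_right _ (Nat.mul_le_mul_left _ h4)
    _ = a2 * (a1 * u) := by ring
    _ ≤ a2 * D1 := Nat.mul_le_mul_left _ (hs ▸ h1)

lemma final_trick {D1 D2 a1 a2 b1 b2 : ℕ} (k1 : D2 * a1 ≤ a2 * D1)
    (k2 : D2 * b1 ≤ b2 * D1) (ha : a1 + b1 = D1 + 1) (hb : a2 + b2 = D2 + 1) :
    D2 ≤ D1 := by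
  have h : D2 * (D1 + 1) ≤ (D2 + 1) * D1 := by
    rw [← ha, ← hb, Nat.mul_add, Nat.add_mul]
    exact Nat.add_le_add k1 k2
  have e1 : D2 * (D1 + 1) = D2 * D1 + D2 := by ring
  have e2 : (D2 + 1) * D1 = D2 * D1 + D1 := by ring
  rw [e1, e2] at h
  exact le_of_add_le_add_left h

lemma q_anti (h1 : IsPartitionOf N p₁) (h2 : IsPartitionOf N p₂) (hN : 1 ≤ N)
    {i : ℕ} (hi : 1 ≤ i) : q N p₁ p₂ (i + 1) ≤ q N p₁ p₂ i := by
  rcases Nat.eq_zero_or_pos (q N p₁ p₂ (i+1)) with h0 | hpos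
  · omega
  have hT2 : (T N p₁ p₂ (i+1)) = (T N p₁ p₂ i) + q N p₁ p₂ (i+1) := T_succ i
  have hT1 : (T N p₁ p₂ i) = (T N p₁ p₂ (i-1)) + q N p₁ p₂ i := by
    have h := T_succ (N := N) (p₁ := p₁) (p₂ := p₂) (i - 1)
    rwa [Nat.sub_add_cancel hi] at h
  have ht2N : (T N p₁ p₂ (i+1)) ≤ N := T_le_N _
  have ht11 : 1 ≤ (T N p₁ p₂ i) + 1 := by omega
  have hchin_t1' : chin p₁ p₂ ((T N p₁ p₂ i) + 1) = i + 1 := by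
    have hle : (T N p₁ p₂ i) + 1 ≤ N := by omega
    have h_up : chin p₁ p₂ ((T N p₁ p₂ i) + 1) ≤ i + 1 :=
      (T_char h1 h2 ht11 hle).mp (by omega)
    have h_dn : ¬ chin p₁ p₂ ((T N p₁ p₂ i) + 1) ≤ i := by
      intro hcc
      have := (T_char h1 h2 ht11 hle).mpr hcc
      omega
    omega
  have ht1pos : 1 ≤ (T N p₁ p₂ i) := by
    by_contra h
    have h0' : (T N p₁ p₂ i) = 0 := by omega
    have hco := chin_one h1 h2 hN
    rw [h0', Nat.zero_add] at hchin_t1'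
    omega
  have ht1N : (T N p₁ p₂ i) ≤ N := T_le_N _
  have hchin_t1 : chin p₁ p₂ (T N p₁ p₂ i) = i := by
    have h_up : chin p₁ p₂ (T N p₁ p₂ i) ≤ i := (T_char h1 h2 ht1pos ht1N).mp le_rfl
    have h_st := chin_step h1 h2 ht1pos (by omega)
    omega
  obtain ⟨HS1a, HS1b, Hab1⟩ := transition h1 h2 ht1pos (by omega)
      (by rw [hchin_t1, hchin_t1'])
  rw [hchin_t1] at Hab1
  have hqipos : 1 ≤ q N p₁ p₂ i := by
    have hmem : (T N p₁ p₂ i) ∈ (Finset.Icc 1 N).filter (fun k => chin p₁ p₂ k = i) :=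
      Finset.mem_filter.mpr ⟨Finset.mem_Icc.mpr ⟨ht1pos, ht1N⟩, hchin_t1⟩
    have := Finset.card_pos.mpr ⟨(T N p₁ p₂ i), hmem⟩
    rw [q]
    omega
  have ha1 := chiOf_mem h1 ht1pos ht1N
  -- level i - 1 data
  obtain ⟨a0, b0, HS0a, HS0b, Hab0, Ha01, Hb01⟩ :
      ∃ a0 b0, S p₁ a0 = (T N p₁ p₂ (i-1)) ∧ S p₂ b0 = (T N p₁ p₂ (i-1)) ∧
        a0 + b0 + 1 = (T N p₁ p₂ (i-1)) + i ∧ a0 < (chiOf p₁ (T N p₁ p₂ i)) ∧ b0 < (chiOf p₂ (T N p₁ p₂ i)) := by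
    rcases Nat.lt_or_ge i 2 with h1i | h2i
    · have hieq : i = 1 := by omega
      have hb1 := chiOf_mem h2 ht1pos ht1N
      have hT00 : (T N p₁ p₂ (i-1)) = 0 := by
        rw [show i - 1 = 0 by omega]
        exact T_zero
      exact ⟨0, 0, by rw [S_zero, hT00], by rw [S_zero, hT00], by omega,
        by have := ha1.1; omega, by have := hb1.1; omega⟩
    · have ht01 : 1 ≤ (T N p₁ p₂ (i-1)) + 1 := by omega
      have ht0N : (T N p₁ p₂ (i-1)) + 1 ≤ N := by omega
      have hchin_t0' : chin p₁ p₂ ((T N p₁ p₂ (i-1)) + 1) = i := by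
        have h_up : chin p₁ p₂ ((T N p₁ p₂ (i-1)) + 1) ≤ i := by
          apply (T_char h1 h2 ht01 ht0N).mp
          have : (T N p₁ p₂ (i-1)) + 1 ≤ (T N p₁ p₂ i) := by omega
          calc (T N p₁ p₂ (i-1)) + 1 ≤ (T N p₁ p₂ i) := this
            _ ≤ (T N p₁ p₂ i) := le_rfl
        have h_dn : ¬ chin p₁ p₂ ((T N p₁ p₂ (i-1)) + 1) ≤ i - 1 := by
          intro hcc
          have hcc' : chin p₁ p₂ ((T N p₁ p₂ (i-1)) + 1) ≤ i - 1 := hcc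
          have := (T_char h1 h2 ht01 ht0N).mpr hcc'
          omega
        omega
      have ht0pos : 1 ≤ (T N p₁ p₂ (i-1)) := by
        by_contra h
        have h0' : (T N p₁ p₂ (i-1)) = 0 := by omega
        have hco := chin_one h1 h2 hN
        rw [h0', Nat.zero_add] at hchin_t0'
        omega
      have ht0N' : (T N p₁ p₂ (i-1)) ≤ N := by omega
      have hchin_t0 : chin p₁ p₂ (T N p₁ p₂ (i-1)) = i - 1 := by
        have h_up : chin p₁ p₂ (T N p₁ p₂ (i-1)) ≤ i - 1 := (T_char h1 h2 ht0pos ht0N').mp le_rfl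
        have h_st := chin_step h1 h2 ht0pos (by omega)
        omega
      obtain ⟨HS0a, HS0b, Hab0⟩ := transition h1 h2 ht0pos (by omega)
          (by rw [hchin_t0, hchin_t0']; omega)
      rw [hchin_t0] at Hab0
      refine ⟨chiOf p₁ (T N p₁ p₂ (i-1)), chiOf p₂ (T N p₁ p₂ (i-1)), HS0a, HS0b, by omega, ?_, ?_⟩
      · by_contra hcc
        push_neg at hcc
        have := S_mono p₁ hcc
        omega
      · by_contra hcc
        push_neg at hcc
        have := S_mono p₂ hcc
        omega
  -- level i + 1 data
  have ht21 : 1 ≤ (T N p₁ p₂ (i+1)) := by omega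
  have hchin_t2 : chin p₁ p₂ (T N p₁ p₂ (i+1)) = i + 1 := by
    have h_up : chin p₁ p₂ (T N p₁ p₂ (i+1)) ≤ i + 1 := (T_char h1 h2 ht21 ht2N).mp le_rfl
    have h_dn : ¬ chin p₁ p₂ (T N p₁ p₂ (i+1)) ≤ i := by
      intro hcc
      have := (T_char h1 h2 ht21 ht2N).mpr hcc
      omega
    omega
  have ha2 := chiOf_mem h1 ht21 ht2N
  have hb2 := chiOf_mem h2 ht21 ht2N
  have Hab2 : (chiOf p₁ (T N p₁ p₂ (i+1))) + (chiOf p₂ (T N p₁ p₂ (i+1))) = (T N p₁ p₂ (i+1)) + i + 1 := by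
    rw [chin] at hchin_t2
    omega
  have ha12 : (chiOf p₁ (T N p₁ p₂ i)) < (chiOf p₁ (T N p₁ p₂ (i+1))) := by
    by_contra hcc
    push_neg at hcc
    have := S_mono p₁ hcc
    omega
  have hb12 : (chiOf p₂ (T N p₁ p₂ i)) < (chiOf p₂ (T N p₁ p₂ (i+1))) := by
    by_contra hcc
    push_neg at hcc
    have := S_mono p₂ hcc
    omega
  -- segment sums, first partition
  have E1 : S p₁ a0 + ∑ j ∈ Finset.Ioc a0 (chiOf p₁ (T N p₁ p₂ i)), p₁ j = S p₁ (chiOf p₁ (T N p₁ p₂ i)) :=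
    S_split p₁ (le_of_lt Ha01)
  have L1 : ((chiOf p₁ (T N p₁ p₂ i)) - a0) * p₁ (chiOf p₁ (T N p₁ p₂ i)) ≤ ∑ j ∈ Finset.Ioc a0 (chiOf p₁ (T N p₁ p₂ i)), p₁ j :=
    seg_lower h1 (le_of_lt Ha01) ha1.1
  have E2 : S p₁ (chiOf p₁ (T N p₁ p₂ i)) + ∑ j ∈ Finset.Ioc (chiOf p₁ (T N p₁ p₂ i)) (chiOf p₁ (T N p₁ p₂ (i+1))), p₁ j = S p₁ (chiOf p₁ (T N p₁ p₂ (i+1))) :=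
    S_split p₁ (le_of_lt ha12)
  have U2 : ∑ j ∈ Finset.Ioc (chiOf p₁ (T N p₁ p₂ i)) (chiOf p₁ (T N p₁ p₂ (i+1))), p₁ j ≤ ((chiOf p₁ (T N p₁ p₂ (i+1))) - (chiOf p₁ (T N p₁ p₂ i))) * p₁ ((chiOf p₁ (T N p₁ p₂ i)) + 1) :=
    seg_upper h1 (le_of_lt ha12)
  have hmono1 : p₁ ((chiOf p₁ (T N p₁ p₂ i)) + 1) ≤ p₁ (chiOf p₁ (T N p₁ p₂ i)) := h1.1 _ ha1.1
  have hsum1 : ∑ j ∈ Finset.Ioc a0 (chiOf p₁ (T N p₁ p₂ i)), p₁ j = q N p₁ p₂ i := by omega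
  have hq2le1 : q N p₁ p₂ (i+1) ≤ ∑ j ∈ Finset.Ioc (chiOf p₁ (T N p₁ p₂ i)) (chiOf p₁ (T N p₁ p₂ (i+1))), p₁ j := by
    have := ha2.2
    omega
  have key1 : q N p₁ p₂ (i+1) * ((chiOf p₁ (T N p₁ p₂ i)) - a0) ≤ ((chiOf p₁ (T N p₁ p₂ (i+1))) - (chiOf p₁ (T N p₁ p₂ i))) * q N p₁ p₂ i :=
    mul_trick L1 hsum1 hq2le1 U2 hmono1
  -- segment sums, second partition
  have hb1 := chiOf_mem h2 ht1pos ht1N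
  have F1 : S p₂ b0 + ∑ j ∈ Finset.Ioc b0 (chiOf p₂ (T N p₁ p₂ i)), p₂ j = S p₂ (chiOf p₂ (T N p₁ p₂ i)) :=
    S_split p₂ (le_of_lt Hb01)
  have M1 : ((chiOf p₂ (T N p₁ p₂ i)) - b0) * p₂ (chiOf p₂ (T N p₁ p₂ i)) ≤ ∑ j ∈ Finset.Ioc b0 (chiOf p₂ (T N p₁ p₂ i)), p₂ j :=
    seg_lower h2 (le_of_lt Hb01) hb1.1
  have F2 : S p₂ (chiOf p₂ (T N p₁ p₂ i)) + ∑ j ∈ Finset.Ioc (chiOf p₂ (T N p₁ p₂ i)) (chiOf p₂ (T N p₁ p₂ (i+1))), p₂ j = S p₂ (chiOf p₂ (T N p₁ p₂ (i+1))) :=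
    S_split p₂ (le_of_lt hb12)
  have V2 : ∑ j ∈ Finset.Ioc (chiOf p₂ (T N p₁ p₂ i)) (chiOf p₂ (T N p₁ p₂ (i+1))), p₂ j ≤ ((chiOf p₂ (T N p₁ p₂ (i+1))) - (chiOf p₂ (T N p₁ p₂ i))) * p₂ ((chiOf p₂ (T N p₁ p₂ i)) + 1) :=
    seg_upper h2 (le_of_lt hb12)
  have hmono2 : p₂ ((chiOf p₂ (T N p₁ p₂ i)) + 1) ≤ p₂ (chiOf p₂ (T N p₁ p₂ i)) := h2.1 _ hb1.1
  have hsum2 : ∑ j ∈ Finset.Ioc b0 (chiOf p₂ (T N p₁ p₂ i)), p₂ j = q N p₁ p₂ i := by omega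
  have hq2le2 : q N p₁ p₂ (i+1) ≤ ∑ j ∈ Finset.Ioc (chiOf p₂ (T N p₁ p₂ i)) (chiOf p₂ (T N p₁ p₂ (i+1))), p₂ j := by
    have := hb2.2
    omega
  have key2 : q N p₁ p₂ (i+1) * ((chiOf p₂ (T N p₁ p₂ i)) - b0) ≤ ((chiOf p₂ (T N p₁ p₂ (i+1))) - (chiOf p₂ (T N p₁ p₂ i))) * q N p₁ p₂ i :=
    mul_trick M1 hsum2 hq2le2 V2 hmono2
  -- combine
  have halpha : ((chiOf p₁ (T N p₁ p₂ i)) - a0) + ((chiOf p₂ (T N p₁ p₂ i)) - b0) = q N p₁ p₂ i + 1 := by omega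
  have hbeta : ((chiOf p₁ (T N p₁ p₂ (i+1))) - (chiOf p₁ (T N p₁ p₂ i))) + ((chiOf p₂ (T N p₁ p₂ (i+1))) - (chiOf p₂ (T N p₁ p₂ i))) = q N p₁ p₂ (i+1) + 1 := by omega
  exact final_trick key1 key2 halpha hbeta

end TwoPartitions

end Nodal

/-- for two nonzero partitions of `N`, the nodal sequence
`max(1, χ¹_k + χ²_k − k)` is the vanishing-order sequence of some partition of `N`. -/
theorem nodal_sequence_is_vanishing_order_two
    (N : ℕ) (hN : 2 ≤ N) (p₁ p₂ χ₁ χ₂ : ℕ → ℕ)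
    (h1 : IsVanishingOrderSeq N p₁ χ₁) (hp1 : 2 ≤ p₁ 1)
    (h2 : IsVanishingOrderSeq N p₂ χ₂) (hp2 : 2 ≤ p₂ 1) :
    ∃ q : ℕ → ℕ, IsPartitionOf N q ∧
      ∀ k, 1 ≤ k → k ≤ N →
        (chiOf q k : ℤ) = max 1 ((χ₁ k : ℤ) + (χ₂ k : ℤ) - (k : ℤ)) := by
  obtain ⟨hP1, hχ1⟩ := h1
  obtain ⟨hP2, hχ2⟩ := h2
  have hN1 : 1 ≤ N := by omega
  refine ⟨Nodal.q N p₁ p₂, ⟨?_, ?_, ?_⟩, ?_⟩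
  · intro i hi
    exact Nodal.q_anti hP1 hP2 hN1 hi
  · exact Nodal.q_sum hP1 hP2
  · intro i hi
    exact Nodal.q_vanish hP1 hP2 hi
  · intro k hk hkN
    have hq := Nodal.chiOf_q hP1 hP2 hk hkN
    rw [hq, hχ1 k hk hkN, hχ2 k hk hkN]
    rw [Nodal.chin]
    have hc1 := Nodal.chiOf_le_self hP1 hk hkN
    have hc2 := Nodal.chiOf_le_self hP2 hk hkN
    push_cast
    omega
end

section
/- Let N ≥ 2, n ≥ 1, and let χ⁽¹⁾,…,χ⁽ⁿ⁾ be the vanishing-order sequences of n nonzero partitions of N. Then the nodal sequence χ_k := max(1, ∑_{i=1}^{n} χ⁽ⁱ⁾_k − (n−1)k), k ∈ {1,…,N}, is the vanishing-order sequence of some partition of N. -/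
namespace NodalAux

abbrev S (p : ℕ → ℕ) (m : ℕ) : ℕ := ∑ j ∈ Finset.Icc 1 m, p j

lemma S_succ (p : ℕ → ℕ) (m : ℕ) : S p (m+1) = S p m + p (m+1) := by
  unfold S
  rw [← Finset.sum_Icc_succ_top (by omega : 1 ≤ m + 1)]

lemma p_anti {p : ℕ → ℕ} (hp : ∀ i, 1 ≤ i → p (i+1) ≤ p i) :
    ∀ a b, 1 ≤ a → a ≤ b → p b ≤ p a := by
  intro a b ha hab
  induction b with
  | zero => omega
  | succ b ih =>
    rcases Nat.eq_or_lt_of_le hab with h|h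
    · exact le_of_eq (by rw [h])
    · exact le_trans (hp b (by omega)) (ih (by omega))

lemma S_mono (p : ℕ → ℕ) {a b : ℕ} (hab : a ≤ b) : S p a ≤ S p b :=
  Finset.sum_le_sum_of_subset (Finset.Icc_subset_Icc_right hab)

lemma S_tail_zero {p : ℕ → ℕ} (hp : ∀ i, 1 ≤ i → p (i+1) ≤ p i)
    {m : ℕ} (hm : 1 ≤ m) (hpm : p m = 0) :
    ∀ t, S p (m - 1 + t) = S p (m-1) := by
  intro t
  induction t with
  | zero => rfl
  | succ t ih =>
    have h1 : m - 1 + (t+1) = (m - 1 + t) + 1 := by omega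
    rw [h1, S_succ, ih]
    have : p (m - 1 + t + 1) ≤ p m := p_anti hp m (m-1+t+1) hm (by omega)
    omega

section Single

variable {N : ℕ} {p : ℕ → ℕ} (hp : IsPartitionOf N p)

include hp in
lemma chi_spec {k : ℕ} (hk1 : 1 ≤ k) (hkN : k ≤ N) :
    1 ≤ chiOf p k ∧ k ≤ S p (chiOf p k) := by
  have hmem : chiOf p k ∈ {i | 1 ≤ i ∧ k ≤ S p i} :=
    Nat.sInf_mem ⟨N, by omega, by rw [show S p N = N from hp.2.1]; exact hkN⟩
  exact hmem

lemma chi_min {k m : ℕ} (hm : 1 ≤ m) (hkm : k ≤ S p m) : chiOf p k ≤ m :=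
  Nat.sInf_le ⟨hm, hkm⟩

lemma chi_pred_lt {k : ℕ} (h2c : 2 ≤ chiOf p k) : S p (chiOf p k - 1) < k := by
  by_contra hcon
  push_neg at hcon
  have := chi_min (p := p) (k := k) (m := chiOf p k - 1) (by omega) hcon
  omega

include hp in
lemma parts_pos {k m : ℕ} (hk1 : 1 ≤ k) (hkN : k ≤ N)
    (hm1 : 1 ≤ m) (hm : m ≤ chiOf p k) : 1 ≤ p m := by
  by_contra hcon
  have hpm : p m = 0 := by omega
  have hC := chi_spec hp hk1 hkN
  have ht := S_tail_zero hp.1 hm1 hpm (chiOf p k - (m-1))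
  rw [show m - 1 + (chiOf p k - (m-1)) = chiOf p k by omega] at ht
  rcases Nat.eq_or_lt_of_le hm1 with h1|h1
  · have : S p 0 = 0 := by simp [S]
    rw [ht, show m - 1 = 0 by omega, this] at hC
    omega
  · have := chi_min (p := p) (k := k) (m := m - 1) (by omega) (by omega)
    omega

lemma S_lb {m : ℕ} (hm : 1 ≤ m) (h2 : 2 ≤ p 1)
    (hpos : ∀ j, 1 ≤ j → j ≤ m → 1 ≤ p j) : m + 1 ≤ S p m := by
  induction m with
  | zero => omega
  | succ m ih =>
    rcases Nat.eq_zero_or_pos m with h0|h0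
    · subst h0; simpa [S] using h2
    · have := ih (by omega) (fun j hj hjm => hpos j hj (by omega))
      have := hpos (m+1) (by omega) le_rfl
      rw [S_succ]; omega

lemma S_lb2 {m : ℕ} (hpos : ∀ j, 1 ≤ j → j ≤ m → 2 ≤ p j) : 2 * m ≤ S p m := by
  induction m with
  | zero => simp
  | succ m ih =>
    have := ih (fun j hj hjm => hpos j hj (by omega))
    have := hpos (m+1) (by omega) le_rfl
    rw [S_succ]; omega

include hp in
lemma chi_one (h2 : 2 ≤ p 1) : chiOf p 1 = 1 := by
  have h1 : chiOf p 1 ≤ 1 := chi_min (p := p) le_rfl (by simpa [S] using by omega)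
  have h0 : 1 ≤ chiOf p 1 := by
    have hmem : chiOf p 1 ∈ {i | 1 ≤ i ∧ 1 ≤ S p i} :=
      Nat.sInf_mem ⟨1, le_rfl, by simpa [S] using by omega⟩
    exact hmem.1
  omega

include hp in
lemma chi_lt (h2 : 2 ≤ p 1) {k : ℕ} (hk2 : 2 ≤ k) (hkN : k ≤ N) : chiOf p k < k := by
  have hC := chi_spec hp (by omega : 1 ≤ k) hkN
  rcases Nat.lt_or_ge (chiOf p k) 2 with h|h
  · omega
  · have hlt := chi_pred_lt (p := p) (k := k) h
    have hlb := S_lb (p := p) (m := chiOf p k - 1) (by omega) h2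
      (fun j hj hjm => parts_pos hp (by omega : 1 ≤ k) hkN hj (by omega))
    omega

include hp in
lemma chi_le_k (h2 : 2 ≤ p 1) {k : ℕ} (hk1 : 1 ≤ k) (hkN : k ≤ N) : chiOf p k ≤ k := by
  rcases Nat.lt_or_ge k 2 with h|h
  · have : k = 1 := by omega
    subst this
    rw [chi_one hp h2]
  · exact le_of_lt (chi_lt hp h2 h hkN)

include hp in
lemma chi_mono {k k' : ℕ} (hk1 : 1 ≤ k) (hkk : k ≤ k') (hkN : k' ≤ N) :
    chiOf p k ≤ chiOf p k' := by
  have hC := chi_spec hp (by omega : 1 ≤ k') hkN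
  exact chi_min (p := p) hC.1 (le_trans hkk hC.2)

include hp in
lemma chi_succ_le {k : ℕ} (hk1 : 1 ≤ k) (hkN : k + 1 ≤ N) (h2 : 2 ≤ p 1) :
    chiOf p (k+1) ≤ chiOf p k + 1 := by
  have hC := chi_spec hp hk1 (by omega)
  rcases Nat.lt_or_ge (S p (chiOf p k)) (k+1) with h|h
  · -- S p (C k) = k, need p (C k + 1) ≥ 1
    have hCk : chiOf p k ≤ k := chi_le_k hp h2 hk1 (by omega)
    have hpos : 1 ≤ p (chiOf p k + 1) := by
      by_contra hcon
      have hpm : p (chiOf p k + 1) = 0 := by omega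
      have ht := S_tail_zero hp.1 (m := chiOf p k + 1) (by omega) hpm (N - chiOf p k)
      rw [show chiOf p k + 1 - 1 + (N - chiOf p k) = N by omega,
          show chiOf p k + 1 - 1 = chiOf p k from by omega] at ht
      rw [show S p N = N from hp.2.1] at ht
      omega
    have : k + 1 ≤ S p (chiOf p k + 1) := by rw [S_succ]; omega
    exact chi_min (p := p) (by omega) this
  · exact le_trans (chi_min (p := p) hC.1 h) (by omega)

include hp in
lemma chi_interior (h2 : 2 ≤ p 1) {k : ℕ} (hk1 : 1 ≤ k) (hkN : k ≤ N)
    (hS : k + 1 ≤ S p (chiOf p k)) : 2 * chiOf p k ≤ k + 1 := by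
  have hC := chi_spec hp hk1 hkN
  rcases Nat.lt_or_ge (chiOf p k) 2 with h|h
  · omega
  · have hlt := chi_pred_lt (p := p) (k := k) h
    have hSs := S_succ p (chiOf p k - 1)
    rw [show chiOf p k - 1 + 1 = chiOf p k from by omega] at hSs
    have hp2 : 2 ≤ p (chiOf p k) := by omega
    have hall : ∀ j, 1 ≤ j → j ≤ chiOf p k - 1 → 2 ≤ p j := by
      intro j hj hjm
      exact le_trans hp2 (p_anti hp.1 j (chiOf p k) hj (by omega))
    have := S_lb2 (p := p) hall
    omega

lemma S_add_le {m : ℕ} (hanti : ∀ i, 1 ≤ i → p (i+1) ≤ p i) (hm : 1 ≤ m) :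
    ∀ t, S p (m + t) ≤ S p m + t * p m := by
  intro t
  induction t with
  | zero => simp
  | succ t ih =>
    rw [show m + (t+1) = (m+t)+1 from rfl, S_succ]
    have : p (m + t + 1) ≤ p m := p_anti hanti m (m+t+1) hm (by omega)
    have : p (m+t+1) ≤ p m := this
    calc S p (m+t) + p (m+t+1) ≤ S p m + t * p m + p m := by omega
    _ = S p m + (t+1) * p m := by ring

lemma S_add_ge (hanti : ∀ i, 1 ≤ i → p (i+1) ≤ p i) (M : ℕ) :
    ∀ t, S p M + t * p (M + t) ≤ S p (M + t) := by
  intro t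
  induction t with
  | zero => simp
  | succ t ih =>
    rw [show M + (t+1) = (M+t)+1 from rfl, S_succ]
    rcases Nat.eq_zero_or_pos (M + t) with h0|h0
    · have hM : M = 0 := by omega
      have ht : t = 0 := by omega
      subst hM; subst ht; simp
    · have : p (M + t + 1) ≤ p (M + t) := hanti (M+t) h0
      nlinarith [ih]

end Single
end NodalAux
namespace NodalAux

section Global

variable {N n : ℕ} (p : Fin n → ℕ → ℕ)

noncomputable def F (n : ℕ) (p : Fin n → ℕ → ℕ) (k : ℕ) : ℤ :=
  (∑ i, (chiOf (p i) k : ℤ)) - ((n : ℤ) - 1) * k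

noncomputable def X (n : ℕ) (p : Fin n → ℕ → ℕ) (k : ℕ) : ℕ :=
  (max 1 (F n p k)).toNat

lemma X_cast (k : ℕ) : (X n p k : ℤ) = max 1 (F n p k) :=
  Int.toNat_of_nonneg (le_trans zero_le_one (le_max_left _ _))

lemma X_pos (k : ℕ) : 1 ≤ X n p k := by
  have := X_cast p k
  have h1 : (1 : ℤ) ≤ max 1 (F n p k) := le_max_left _ _
  omega

variable (hh : ∀ i, IsPartitionOf N (p i) ∧ 2 ≤ p i 1)

include hh

lemma F_one : F n p 1 = 1 := by
  unfold F
  have : ∀ i, chiOf (p i) 1 = 1 := fun i => chi_one (hh i).1 (hh i).2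
  simp [this]

lemma F_le {k : ℕ} (hk1 : 1 ≤ k) (hkN : k ≤ N) : F n p k ≤ k := by
  unfold F
  have hb : ∀ i ∈ Finset.univ, (chiOf (p i) k : ℤ) ≤ (k : ℤ) := by
    intro i _
    exact_mod_cast chi_le_k (hh i).1 (hh i).2 hk1 hkN
  have := Finset.sum_le_sum hb
  simp only [Finset.sum_const, Finset.card_univ, Fintype.card_fin, nsmul_eq_mul] at this
  nlinarith [this]

lemma X_le_k {k : ℕ} (hk1 : 1 ≤ k) (hkN : k ≤ N) : X n p k ≤ k := by
  have h1 := X_cast p k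
  have h2 := F_le p hh hk1 hkN
  have : max 1 (F n p k) ≤ (k : ℤ) := max_le (by exact_mod_cast hk1) h2
  omega

lemma F_succ_le {k : ℕ} (hk1 : 1 ≤ k) (hkN : k + 1 ≤ N) : F n p (k+1) ≤ F n p k + 1 := by
  unfold F
  have hb : ∀ i ∈ Finset.univ, (chiOf (p i) (k+1) : ℤ) ≤ (chiOf (p i) k : ℤ) + 1 := by
    intro i _
    exact_mod_cast chi_succ_le (hh i).1 hk1 hkN (hh i).2
  have := Finset.sum_le_sum hb
  rw [Finset.sum_add_distrib] at this
  simp only [Finset.sum_const, Finset.card_univ, Fintype.card_fin, nsmul_eq_mul,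
    mul_one] at this
  push_cast
  nlinarith [this]

lemma F_key {k : ℕ} (hk1 : 1 ≤ k) (hkN : k + 1 ≤ N) (hF : 2 ≤ F n p k) :
    F n p k ≤ F n p (k+1) := by
  have hk2 : 2 ≤ k := by
    rcases Nat.lt_or_ge k 2 with h|h
    · exfalso; have : k = 1 := by omega
      rw [this, F_one p hh] at hF; omega
    · exact h
  classical
  set Z : Finset (Fin n) := Finset.univ.filter
    (fun i => chiOf (p i) (k+1) = chiOf (p i) k) with hZ
  rcases Nat.lt_or_ge 1 Z.card with hcard|hcard
  · -- contradiction case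
    exfalso
    obtain ⟨i, hi, j, hj, hij⟩ := Finset.one_lt_card.mp hcard
    have hn2 : 2 ≤ n := by
      have : ({i, j} : Finset (Fin n)).card ≤ n := by
        simpa using Finset.card_le_univ ({i, j} : Finset (Fin n))
      rw [Finset.card_pair hij] at this
      exact this
    have hint : ∀ l ∈ Z, 2 * chiOf (p l) k ≤ k + 1 := by
      intro l hl
      have hl' : chiOf (p l) (k+1) = chiOf (p l) k := (Finset.mem_filter.mp hl).2
      have hspec := chi_spec (hh l).1 (k := k+1) (by omega) hkN
      rw [hl'] at hspec
      exact chi_interior (hh l).1 (hh l).2 (by omega) (by omega) hspec.2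
    have hlt : ∀ l : Fin n, chiOf (p l) k < k :=
      fun l => chi_lt (hh l).1 (hh l).2 hk2 (by omega)
    -- sum bound
    have hTsub : ({i, j} : Finset (Fin n)) ⊆ Finset.univ := Finset.subset_univ _
    have hsplit := (Finset.sum_sdiff (f := fun l => (chiOf (p l) k : ℤ)) hTsub)
    have hpair : ∑ l ∈ ({i, j} : Finset (Fin n)), (chiOf (p l) k : ℤ)
        = (chiOf (p i) k : ℤ) + (chiOf (p j) k : ℤ) := Finset.sum_pair hij
    have hrest : ∑ l ∈ (Finset.univ \ ({i, j} : Finset (Fin n))),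
        (chiOf (p l) k : ℤ) ≤ ((n : ℤ) - 2) * ((k : ℤ) - 1) := by
      have hcard2 : (Finset.univ \ ({i, j} : Finset (Fin n))).card = n - 2 := by
        rw [Finset.card_sdiff_of_subset hTsub, Finset.card_pair hij]
        simp
      have hb : ∀ l ∈ (Finset.univ \ ({i, j} : Finset (Fin n))),
          (chiOf (p l) k : ℤ) ≤ (k : ℤ) - 1 := by
        intro l _
        have := hlt l
        omega
      calc ∑ l ∈ (Finset.univ \ ({i, j} : Finset (Fin n))), (chiOf (p l) k : ℤ)
          ≤ (Finset.univ \ ({i, j} : Finset (Fin n))).card • ((k : ℤ) - 1) :=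
            Finset.sum_le_card_nsmul _ _ _ hb
        _ = ((n : ℤ) - 2) * ((k : ℤ) - 1) := by
            rw [hcard2]
            rw [nsmul_eq_mul]
            congr 1
            omega
    have hi2 : 2 * (chiOf (p i) k : ℤ) ≤ (k : ℤ) + 1 := by
      exact_mod_cast hint i hi
    have hj2 : 2 * (chiOf (p j) k : ℤ) ≤ (k : ℤ) + 1 := by
      exact_mod_cast hint j hj
    have hFk : (∑ l, (chiOf (p l) k : ℤ)) ≥ ((n : ℤ) - 1) * k + 2 := by
      unfold F at hF; omega
    have hcast : (2 : ℤ) ≤ (n : ℤ) := by exact_mod_cast hn2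
    nlinarith [hsplit, hpair, hrest, hi2, hj2, hFk]
  · -- at most one stationary index
    unfold F
    have hstep : ∀ l ∈ Finset.univ \ Z, (chiOf (p l) k : ℤ) + 1 ≤ (chiOf (p l) (k+1) : ℤ) := by
      intro l hl
      have hne : chiOf (p l) (k+1) ≠ chiOf (p l) k := by
        simp only [hZ, Finset.mem_sdiff, Finset.mem_filter, Finset.mem_univ] at hl
        tauto
      have hmono := chi_mono (hh l).1 (k := k) (k' := k+1) hk1 (by omega) hkN
      have : chiOf (p l) k < chiOf (p l) (k+1) := lt_of_le_of_ne hmono (fun e => hne e.symm)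
      exact_mod_cast this
    have hZeq : ∀ l ∈ Z, (chiOf (p l) (k+1) : ℤ) = (chiOf (p l) k : ℤ) := by
      intro l hl
      have := (Finset.mem_filter.mp hl).2
      exact_mod_cast this
    have hZsub : Z ⊆ Finset.univ := Finset.subset_univ _
    have h1 := (Finset.sum_sdiff (f := fun l => (chiOf (p l) (k+1) : ℤ)) hZsub)
    have h2 := (Finset.sum_sdiff (f := fun l => (chiOf (p l) k : ℤ)) hZsub)
    have h3 : ∑ l ∈ Z, (chiOf (p l) (k+1) : ℤ) = ∑ l ∈ Z, (chiOf (p l) k : ℤ) :=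
      Finset.sum_congr rfl hZeq
    have h4 : ∑ l ∈ Finset.univ \ Z, ((chiOf (p l) k : ℤ) + 1)
        ≤ ∑ l ∈ Finset.univ \ Z, (chiOf (p l) (k+1) : ℤ) := Finset.sum_le_sum hstep
    rw [Finset.sum_add_distrib] at h4
    simp only [Finset.sum_const, nsmul_eq_mul, mul_one] at h4
    have hcardZ : ((Finset.univ \ Z).card : ℤ) = (n : ℤ) - Z.card := by
      rw [Finset.card_sdiff_of_subset hZsub]
      have : Z.card ≤ n := by simpa using Finset.card_le_card hZsub
      simp only [Finset.card_univ, Fintype.card_fin]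
      omega
    have hZ1 : (Z.card : ℤ) ≤ 1 := by exact_mod_cast hcard
    -- combine
    have hmain : (∑ l, (chiOf (p l) k : ℤ)) + ((n : ℤ) - Z.card)
        ≤ ∑ l, (chiOf (p l) (k+1) : ℤ) := by
      rw [← h1, ← h2]
      linarith [h3, h4, hcardZ]
    push_cast
    nlinarith [hmain, hZ1]

end Global
end NodalAux
namespace NodalAux
section Global2

variable {N n : ℕ} (p : Fin n → ℕ → ℕ)

noncomputable def Q (N : ℕ) {n : ℕ} (p : Fin n → ℕ → ℕ) (w : ℕ) : ℕ :=
  ((Finset.Icc 1 N).filter (fun k => X n p k ≤ w)).card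

noncomputable def qq (N : ℕ) {n : ℕ} (p : Fin n → ℕ → ℕ) (v : ℕ) : ℕ :=
  Q N p v - Q N p (v-1)

lemma Q_le_N (w : ℕ) : Q N p w ≤ N :=
  le_trans (Finset.card_filter_le _ _) (by simp)

lemma Q_zero : Q N p 0 = 0 := by
  unfold Q
  rw [Finset.filter_false_of_mem, Finset.card_empty]
  intro k _
  have := X_pos p k
  omega

lemma Q_mono {w w' : ℕ} (hww : w ≤ w') : Q N p w ≤ Q N p w' := by
  apply Finset.card_le_card
  intro x hx
  rw [Finset.mem_filter] at hx ⊢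
  exact ⟨hx.1, le_trans hx.2 hww⟩

variable (hh : ∀ i, IsPartitionOf N (p i) ∧ 2 ≤ p i 1)

include hh

lemma X_one : X n p 1 = 1 := by
  have h := X_cast p 1
  rw [F_one p hh] at h
  norm_num at h
  omega

lemma Q_big {w : ℕ} (hw : N ≤ w) : Q N p w = N := by
  unfold Q
  rw [Finset.filter_true_of_mem, Nat.card_Icc]
  · omega
  · intro k hk
    rw [Finset.mem_Icc] at hk
    exact le_trans (X_le_k p hh hk.1 hk.2) (by omega)

lemma X_mono_succ {k : ℕ} (hk1 : 1 ≤ k) (hkN : k + 1 ≤ N) :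
    X n p k ≤ X n p (k+1) := by
  have h1 := X_cast p k
  have h2 := X_cast p (k+1)
  have h3 := X_pos p (k+1)
  rcases le_or_gt (F n p k) 1 with h|h
  · have : max 1 (F n p k) = 1 := max_eq_left h
    omega
  · have hF := F_key p hh hk1 hkN (by omega)
    have : max 1 (F n p k) ≤ max 1 (F n p (k+1)) := max_le_max le_rfl hF
    omega

lemma X_mono {k k' : ℕ} (hk1 : 1 ≤ k) (hkk : k ≤ k') (hkN : k' ≤ N) :
    X n p k ≤ X n p k' := by
  induction k' with
  | zero => omega
  | succ m ih =>
    rcases Nat.eq_or_lt_of_le hkk with h|h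
    · rw [h]
    · exact le_trans (ih (by omega) (by omega))
        (X_mono_succ p hh (by omega) (by omega))

lemma P0 {k w : ℕ} (hk1 : 1 ≤ k) (hkN : k ≤ N) :
    X n p k ≤ w ↔ k ≤ Q N p w := by
  constructor
  · intro hX
    have hsub : Finset.Icc 1 k ⊆ (Finset.Icc 1 N).filter (fun k' => X n p k' ≤ w) := by
      intro k' hk'
      rw [Finset.mem_Icc] at hk'
      rw [Finset.mem_filter, Finset.mem_Icc]
      exact ⟨⟨hk'.1, by omega⟩, le_trans (X_mono p hh hk'.1 hk'.2 hkN) hX⟩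
    have := Finset.card_le_card hsub
    rw [Nat.card_Icc] at this
    unfold Q
    omega
  · intro hQ
    by_contra hX
    push_neg at hX
    have hsub : (Finset.Icc 1 N).filter (fun k' => X n p k' ≤ w) ⊆ Finset.Icc 1 (k-1) := by
      intro k' hk'
      rw [Finset.mem_filter, Finset.mem_Icc] at hk'
      rw [Finset.mem_Icc]
      refine ⟨hk'.1.1, ?_⟩
      by_contra hge
      push_neg at hge
      have := X_mono p hh hk1 (by omega : k ≤ k') hk'.1.2
      omega
    have := Finset.card_le_card hsub
    rw [Nat.card_Icc] at this
    unfold Q at hQ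
    omega

omit hh in
lemma Qsum : ∀ m, ∑ j ∈ Finset.Icc 1 m, qq N p j = Q N p m := by
  intro m
  induction m with
  | zero => simp [Q_zero]
  | succ m ih =>
    rw [Finset.sum_Icc_succ_top (by omega : 1 ≤ m + 1), ih]
    have h1 : Q N p m ≤ Q N p (m+1) := Q_mono p (by omega)
    unfold qq
    simp only [Nat.add_sub_cancel]
    omega

lemma all_steps {k : ℕ} (hk1 : 1 ≤ k) (hkN : k + 1 ≤ N)
    (hstep : F n p (k+1) = F n p k + 1) :
    ∀ i, chiOf (p i) (k+1) = chiOf (p i) k + 1 := by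
  by_contra hcon
  push_neg at hcon
  obtain ⟨i, hi⟩ := hcon
  have hle : ∀ l, chiOf (p l) (k+1) ≤ chiOf (p l) k + 1 :=
    fun l => chi_succ_le (hh l).1 hk1 hkN (hh l).2
  have hsum : ∑ l, (chiOf (p l) (k+1) : ℤ) < ∑ l, ((chiOf (p l) k : ℤ) + 1) :=
    Finset.sum_lt_sum (fun l _ => by exact_mod_cast hle l)
      ⟨i, Finset.mem_univ i, by
        have : chiOf (p i) (k+1) < chiOf (p i) k + 1 := lt_of_le_of_ne (hle i) hi
        exact_mod_cast this⟩
  rw [Finset.sum_add_distrib] at hsum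
  simp only [Finset.sum_const, Finset.card_univ, Fintype.card_fin, nsmul_eq_mul,
    mul_one] at hsum
  unfold F at hstep
  push_cast at hstep
  nlinarith [hsum, hstep]

lemma sum_at_chi {k : ℕ} (hk1 : 1 ≤ k) (hkN : k + 1 ≤ N) (i : Fin n)
    (hstep_i : chiOf (p i) (k+1) = chiOf (p i) k + 1) :
    S (p i) (chiOf (p i) k) = k := by
  have h1 := chi_spec (hh i).1 (k := k) (by omega) (by omega)
  by_contra hcon
  have hS : k + 1 ≤ S (p i) (chiOf (p i) k) := by omega
  have := chi_min (p := p i) (k := k+1) h1.1 hS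
  omega

set_option maxHeartbeats 1000000 in
lemma q_anti (hN1 : 1 ≤ N) {v : ℕ} (hv : 1 ≤ v) : qq N p (v+1) ≤ qq N p v := by
  have hAB : Q N p (v-1) ≤ Q N p v := Q_mono p (by omega)
  have hBC : Q N p v ≤ Q N p (v+1) := Q_mono p (by omega)
  rcases Nat.eq_or_lt_of_le hBC with heq|hlt
  · unfold qq
    simp only [Nat.add_sub_cancel]
    omega
  -- main case
  set A := Q N p (v-1) with hA
  set B := Q N p v with hB
  set Cc := Q N p (v+1) with hCc
  have hCcN : Cc ≤ N := Q_le_N p _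
  have hB1 : 1 ≤ B := by
    rw [hB]
    exact (P0 p hh le_rfl hN1).mp (by rw [X_one p hh]; omega)
  have hBN : B + 1 ≤ N := by omega
  have hXB1v : X n p (B+1) = v + 1 := by
    have hle : X n p (B+1) ≤ v + 1 := (P0 p hh (by omega) (by omega)).mpr (by omega)
    have hgt : ¬ X n p (B+1) ≤ v := by
      intro hcon
      have := (P0 p hh (k := B+1) (by omega) (by omega)).mp hcon
      omega
    omega
  have hFB1 : F n p (B+1) = (v : ℤ) + 1 := by
    have hx := X_cast p (B+1)
    rw [hXB1v] at hx
    push_cast at hx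
    rcases le_or_gt (F n p (B+1)) 1 with h|h
    · rw [max_eq_left h] at hx
      have : (1:ℤ) ≤ (v:ℤ) := by exact_mod_cast hv
      omega
    · rw [max_eq_right (by omega)] at hx
      omega
  have hXB : X n p B ≤ v := (P0 p hh hB1 (by omega)).mpr (by omega)
  have hFB : F n p B = (v : ℤ) := by
    have h1 := F_succ_le p hh hB1 hBN
    have h2 := X_cast p B
    have h3 : F n p B ≤ max 1 (F n p B) := le_max_right _ _
    have h4 : (X n p B : ℤ) ≤ (v : ℤ) := by exact_mod_cast hXB
    omega
  have hstepB : ∀ i, chiOf (p i) (B+1) = chiOf (p i) B + 1 :=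
    all_steps p hh hB1 hBN (by rw [hFB1, hFB])
  have hSB : ∀ i, S (p i) (chiOf (p i) B) = B :=
    fun i => sum_at_chi p hh hB1 hBN i (hstepB i)
  have hAltB : A < B := by
    rcases Nat.eq_or_lt_of_le hAB with h|h
    · exfalso
      have hXBle : X n p B ≤ v - 1 := (P0 p hh hB1 (by omega)).mpr (by omega)
      have h2 := X_cast p B
      rw [hFB] at h2
      have : max 1 (v:ℤ) = (v:ℤ) := max_eq_right (by exact_mod_cast hv)
      rw [this] at h2
      omega
    · exact h
  obtain ⟨M, hSM, hMlt, hsumM⟩ : ∃ M : Fin n → ℕ, (∀ i, S (p i) (M i) = A) ∧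
      (∀ i, M i < chiOf (p i) B) ∧
      ((∑ i, (M i : ℤ)) = ((v:ℤ) - 1) + ((n:ℤ)-1) * (A : ℤ)) := by
    rcases Nat.eq_or_lt_of_le hv with hv1|hv2
    · have hA0 : A = 0 := by rw [hA, ← hv1]; exact Q_zero p
      refine ⟨fun _ => 0, fun i => by simp [S, hA0], fun i => ?_, ?_⟩
      · exact (chi_spec (hh i).1 hB1 (by omega)).1
      · rw [hA0, ← hv1]; simp
    · have hA1 : 1 ≤ A := by
        rw [hA]
        exact (P0 p hh le_rfl hN1).mp (by rw [X_one p hh]; omega)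
      have hA1N : A + 1 ≤ N := by omega
      have hXA1v : X n p (A+1) = v := by
        have hle : X n p (A+1) ≤ v := (P0 p hh (by omega) (by omega)).mpr (by omega)
        have hgt : ¬ X n p (A+1) ≤ v - 1 := by
          intro hcon
          have := (P0 p hh (k := A+1) (by omega) (by omega)).mp hcon
          omega
        omega
      have hFA1 : F n p (A+1) = (v : ℤ) := by
        have hx := X_cast p (A+1)
        rw [hXA1v] at hx
        rcases le_or_gt (F n p (A+1)) 1 with h|h
        · rw [max_eq_left h] at hx
          have : (2:ℤ) ≤ (v:ℤ) := by exact_mod_cast hv2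
          omega
        · rw [max_eq_right (by omega)] at hx
          omega
      have hXA : X n p A ≤ v - 1 := (P0 p hh hA1 (by omega)).mpr (by omega)
      have hFA : F n p A = (v : ℤ) - 1 := by
        have h1 := F_succ_le p hh hA1 (by omega)
        have h2 := X_cast p A
        have h3 : F n p A ≤ max 1 (F n p A) := le_max_right _ _
        have h4 : (X n p A : ℤ) ≤ (v : ℤ) - 1 := by
          have : ((v:ℕ) - 1 : ℕ) = ((v:ℤ) - 1 : ℤ).toNat := by omega
          omega
        omega
      have hstepA : ∀ i, chiOf (p i) (A+1) = chiOf (p i) A + 1 :=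
        all_steps p hh hA1 (by omega) (by rw [hFA1, hFA]; ring)
      refine ⟨fun i => chiOf (p i) A,
        fun i => sum_at_chi p hh hA1 (by omega) i (hstepA i), fun i => ?_, ?_⟩
      · show chiOf (p i) A < chiOf (p i) B
        have h1 : chiOf (p i) A < chiOf (p i) (A+1) := by rw [hstepA i]; omega
        have h2 : chiOf (p i) (A+1) ≤ chiOf (p i) B :=
          chi_mono (hh i).1 (by omega) (by omega) (by omega)
        omega
      · show (∑ i, (chiOf (p i) A : ℤ)) = ((v:ℤ) - 1) + ((n:ℤ)-1) * (A:ℤ)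
        unfold F at hFA
        linarith
  have hXCc : X n p Cc = v + 1 := by
    have hle : X n p Cc ≤ v + 1 := (P0 p hh (by omega) hCcN).mpr (by omega)
    have hge : X n p (B+1) ≤ X n p Cc := X_mono p hh (by omega) (by omega) hCcN
    omega
  have hFCc : F n p Cc = (v : ℤ) + 1 := by
    have hx := X_cast p Cc
    rw [hXCc] at hx
    push_cast at hx
    rcases le_or_gt (F n p Cc) 1 with h|h
    · rw [max_eq_left h] at hx
      have : (1:ℤ) ≤ (v:ℤ) := by exact_mod_cast hv
      omega
    · rw [max_eq_right (by omega)] at hx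
      omega
  have hSumB : (∑ i, (chiOf (p i) B : ℤ)) = (v:ℤ) + ((n:ℤ)-1) * B := by
    unfold F at hFB; linarith
  have hSumC : (∑ i, (chiOf (p i) Cc : ℤ)) = ((v:ℤ)+1) + ((n:ℤ)-1) * Cc := by
    unfold F at hFCc; linarith
  -- final arithmetic
  suffices hfin : (Cc : ℤ) - B ≤ (B : ℤ) - A by
    unfold qq
    simp only [Nat.add_sub_cancel]
    omega
  by_contra hcon
  push_neg at hcon
  have hu1 : ∀ i, 1 ≤ p i (chiOf (p i) B) := fun i =>
    parts_pos (hh i).1 hB1 (by omega) (chi_spec (hh i).1 hB1 (by omega)).1 le_rfl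
  have hCiCc : ∀ i, chiOf (p i) B ≤ chiOf (p i) Cc := fun i =>
    chi_mono (hh i).1 hB1 (by omega) hCcN
  have key_i : ∀ i ∈ Finset.univ, ((chiOf (p i) B : ℤ) - M i) * ((Cc:ℤ) - B)
      ≤ ((B:ℤ) - A) * ((chiOf (p i) Cc : ℤ) - chiOf (p i) B) := by
    intro i _
    have K5 : A + (chiOf (p i) B - M i) * p i (chiOf (p i) B) ≤ B := by
      have h := S_add_ge (p := p i) (hh i).1.1 (M i) (chiOf (p i) B - M i)
      rw [show M i + (chiOf (p i) B - M i) = chiOf (p i) B by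
        have := hMlt i; omega] at h
      rw [hSM i, hSB i] at h
      exact h
    have K6 : Cc ≤ B + (chiOf (p i) Cc - chiOf (p i) B) * p i (chiOf (p i) B) := by
      have h1 := (chi_spec (hh i).1 (k := Cc) (by omega) hCcN).2
      have h2 := S_add_le (p := p i) (hh i).1.1
        (chi_spec (hh i).1 hB1 (by omega)).1 (chiOf (p i) Cc - chiOf (p i) B)
      rw [show chiOf (p i) B + (chiOf (p i) Cc - chiOf (p i) B) = chiOf (p i) Cc by
        have := hCiCc i; omega] at h2
      rw [hSB i] at h2
      omega
    have hk5 : ((chiOf (p i) B : ℤ) - M i) * (p i (chiOf (p i) B) : ℤ) ≤ (B:ℤ) - A := by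
      have h := K5
      zify [(hMlt i).le] at h
      linarith
    have hk6 : (Cc:ℤ) - B ≤ ((chiOf (p i) Cc : ℤ) - chiOf (p i) B) * (p i (chiOf (p i) B) : ℤ) := by
      have h := K6
      zify [hCiCc i] at h
      linarith
    have hri : (1:ℤ) ≤ (chiOf (p i) B : ℤ) - M i := by
      have := hMlt i
      have : ((M i : ℤ)) < (chiOf (p i) B : ℤ) := by exact_mod_cast this
      omega
    have htau : (0:ℤ) ≤ (chiOf (p i) Cc : ℤ) - chiOf (p i) B := by
      have := hCiCc i
      have : ((chiOf (p i) B : ℤ)) ≤ (chiOf (p i) Cc : ℤ) := by exact_mod_cast this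
      omega
    calc ((chiOf (p i) B : ℤ) - M i) * ((Cc:ℤ) - B)
        ≤ ((chiOf (p i) B : ℤ) - M i) *
            (((chiOf (p i) Cc : ℤ) - chiOf (p i) B) * (p i (chiOf (p i) B) : ℤ)) :=
          mul_le_mul_of_nonneg_left hk6 (by linarith)
      _ = (((chiOf (p i) B : ℤ) - M i) * (p i (chiOf (p i) B) : ℤ)) *
            ((chiOf (p i) Cc : ℤ) - chiOf (p i) B) := by ring
      _ ≤ ((B:ℤ) - A) * ((chiOf (p i) Cc : ℤ) - chiOf (p i) B) :=
          mul_le_mul_of_nonneg_right hk5 htau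
  have hsum := Finset.sum_le_sum key_i
  rw [← Finset.sum_mul, ← Finset.mul_sum] at hsum
  rw [Finset.sum_sub_distrib, Finset.sum_sub_distrib] at hsum
  have e1 : (∑ i, (chiOf (p i) B : ℤ)) - (∑ i, (M i : ℤ))
      = 1 + ((n:ℤ)-1) * ((B:ℤ)-(A:ℤ)) := by rw [hSumB, hsumM]; ring
  have e2 : (∑ i, (chiOf (p i) Cc : ℤ)) - (∑ i, (chiOf (p i) B : ℤ))
      = 1 + ((n:ℤ)-1) * ((Cc:ℤ)-(B:ℤ)) := by rw [hSumC, hSumB]; ring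
  rw [e1, e2] at hsum
  nlinarith [hsum, hcon]

end Global2
end NodalAux



open NodalAux in
/-- for `n` nonzero partitions of `N`, the nodal sequence
`max(1, ∑ᵢ χ⁽ⁱ⁾_k − (n−1)k)` is the vanishing-order sequence of some partition of `N`. -/
theorem nodal_sequence_is_vanishing_order
    (N n : ℕ) (hN : 2 ≤ N) (hn : 1 ≤ n)
    (p χ : Fin n → ℕ → ℕ)
    (h : ∀ i, IsVanishingOrderSeq N (p i) (χ i) ∧ 2 ≤ p i 1) :
    ∃ q : ℕ → ℕ, IsPartitionOf N q ∧
      ∀ k, 1 ≤ k → k ≤ N →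
        (chiOf q k : ℤ) = max 1 ((∑ i, (χ i k : ℤ)) - ((n : ℤ) - 1) * (k : ℤ)) := by

  have hh : ∀ i, IsPartitionOf N (p i) ∧ 2 ≤ p i 1 := fun i => ⟨(h i).1.1, (h i).2⟩
  have hN1 : 1 ≤ N := by omega
  refine ⟨qq N p, ⟨?_, ?_, ?_⟩, ?_⟩
  · intro v hv
    exact q_anti p hh hN1 hv
  · rw [Qsum (N := N) p N]
    exact Q_big p hh le_rfl
  · intro v hv
    have h1 : Q N p v = N := Q_big p hh (by omega)
    have h2 : Q N p (v-1) = N := Q_big p hh (by omega)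
    unfold qq
    omega
  · intro k hk1 hkN
    have hchi : chiOf (qq N p) k = X n p k := by
      have hmem : X n p k ∈ {m | 1 ≤ m ∧ k ≤ ∑ j ∈ Finset.Icc 1 m, qq N p j} := by
        refine ⟨X_pos p k, ?_⟩
        rw [Qsum (N := N) p]
        exact (P0 p hh hk1 hkN).mp le_rfl
      have hmin : ∀ m ∈ {m | 1 ≤ m ∧ k ≤ ∑ j ∈ Finset.Icc 1 m, qq N p j},
          X n p k ≤ m := by
        intro m hm
        have hQ : k ≤ Q N p m := by
          rw [← Qsum (N := N) p m]
          exact hm.2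
        exact (P0 p hh hk1 hkN).mpr hQ
      exact le_antisymm (Nat.sInf_le hmem) (hmin _ (Nat.sInf_mem ⟨_, hmem⟩))
    rw [hchi]
    have hXc := X_cast p k
    have hFeq : F n p k = (∑ i, (χ i k : ℤ)) - ((n : ℤ) - 1) * (k : ℤ) := by
      unfold F
      congr 1
      apply Finset.sum_congr rfl
      intro i _
      rw [(h i).1.2 k hk1 hkN]
    rw [hXc, hFeq]
end

section
/- Let N ≥ 2 and let χ¹, χ² be the vanishing-order sequences of two nonzero partitions of N. Define b : {2,…,N} → {0,1} by b_k = 1 if and only if χ¹_k + χ²_k ≤ k. Then b is of initial-segment type or of alternating type. -/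
namespace CenterAux

/-- Prefix sums of a partition. -/
def Spre (p : ℕ → ℕ) (a : ℕ) : ℕ := ∑ j ∈ Finset.Icc 1 a, p j

lemma Spre_zero (p : ℕ → ℕ) : Spre p 0 = 0 := by simp [Spre]

lemma Spre_succ (p : ℕ → ℕ) (a : ℕ) : Spre p (a + 1) = Spre p a + p (a + 1) :=
  Finset.sum_Icc_succ_top (by omega) p

lemma Spre_one (p : ℕ → ℕ) : Spre p 1 = p 1 := by
  have := Spre_succ p 0
  rw [Spre_zero] at this
  simpa using this

lemma Spre_mono (p : ℕ → ℕ) {a b : ℕ} (h : a ≤ b) : Spre p a ≤ Spre p b :=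
  Finset.sum_le_sum_of_subset (Finset.Icc_subset_Icc_right h)

/-- parts are nonincreasing (from index 1 on). -/
def Anti (p : ℕ → ℕ) : Prop := ∀ i, 1 ≤ i → p (i + 1) ≤ p i

variable {p q : ℕ → ℕ}

lemma anti_le (hm : Anti p) {i j : ℕ} (hi : 1 ≤ i) (hij : i ≤ j) : p j ≤ p i := by
  induction j, hij using Nat.le_induction with
  | base => exact le_rfl
  | succ n hn ih => exact le_trans (hm n (le_trans hi hn)) ih

lemma Spre_lb (hm : Anti p) (c : ℕ) : ∀ m, 1 ≤ m → c ≤ p m → c * m ≤ Spre p m := by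
  intro m
  induction m with
  | zero => omega
  | succ n ih =>
    intro _ hc
    rcases Nat.eq_zero_or_pos n with h0 | h1
    · subst h0
      simpa [Spre_one] using hc
    · have h2 : c ≤ p n := le_trans hc (hm n h1)
      have h3 := ih h1 h2
      rw [Spre_succ, Nat.mul_succ]
      omega

lemma Spre_lb3 (hm : Anti p) (h3 : 3 ≤ p 1) :
    ∀ m, 1 ≤ m → 2 ≤ p m → 2 * m + 1 ≤ Spre p m := by
  intro m
  induction m with
  | zero => omega
  | succ n ih =>
    intro _ hc
    rcases Nat.eq_zero_or_pos n with h0 | h1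
    · subst h0
      have := Spre_one p
      have h01 : p (0 + 1) = p 1 := rfl
      have h02 : Spre p (0 + 1) = Spre p 1 := rfl
      omega
    · have h2 : 2 ≤ p n := le_trans hc (hm n h1)
      have h4 := ih h1 h2
      rw [Spre_succ, Nat.mul_succ]
      omega

lemma key1 (hm : Anti p) (n : ℕ) {a c : ℕ} (ha : 1 ≤ a) (hS : c ≤ Spre p a)
    (hcon : Spre p (a - 1) + n ≤ c) : n * (a - 1) + n ≤ c := by
  obtain ⟨a', rfl⟩ : ∃ a', a = a' + 1 := ⟨a - 1, by omega⟩
  simp only [Nat.add_sub_cancel] at hcon ⊢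
  have hsplit := Spre_succ p a'
  have hpa : n ≤ p (a' + 1) := by omega
  rcases Nat.eq_zero_or_pos a' with h0 | h1
  · subst h0
    rw [Spre_zero] at hcon
    simpa using hcon
  · have hpb : n ≤ p a' := le_trans hpa (hm a' h1)
    have := Spre_lb hm n a' h1 hpb
    omega

lemma key1' (hm : Anti p) (h3 : 3 ≤ p 1) {a c : ℕ} (ha : 2 ≤ a) (hS : c ≤ Spre p a)
    (hcon : Spre p (a - 1) + 2 ≤ c) : 2 * (a - 1) + 3 ≤ c := by
  obtain ⟨a', rfl⟩ : ∃ a', a = a' + 1 := ⟨a - 1, by omega⟩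
  simp only [Nat.add_sub_cancel] at hcon ⊢
  have hsplit := Spre_succ p a'
  have hpa : 2 ≤ p (a' + 1) := by omega
  have h1 : 1 ≤ a' := by omega
  have hpb : 2 ≤ p a' := le_trans hpa (hm a' h1)
  have := Spre_lb3 hm h3 a' h1 hpb
  omega

lemma two_step (hm : Anti q) {b c : ℕ} (hb : 2 ≤ b) (hS : c ≤ Spre q b)
    (hcon : Spre q (b - 2) + 3 ≤ c) : 2 * (b - 2) + 3 ≤ c := by
  obtain ⟨b', rfl⟩ : ∃ b', b = b' + 2 := ⟨b - 2, by omega⟩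
  simp only [Nat.add_sub_cancel] at hcon ⊢
  have h1 : Spre q (b' + 2) = Spre q (b' + 1) + q (b' + 2) := Spre_succ q (b' + 1)
  have h2 := Spre_succ q b'
  have hanti : q (b' + 2) ≤ q (b' + 1) := hm (b' + 1) (by omega)
  have hq1 : 2 ≤ q (b' + 1) := by omega
  rcases Nat.eq_zero_or_pos b' with h0 | hpos
  · subst h0
    rw [Spre_zero] at hcon
    omega
  · have hqb : 2 ≤ q b' := le_trans hq1 (hm b' hpos)
    have := Spre_lb hm 2 b' hpos hqb
    omega

/-- The existence form of the center condition. -/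
def QQ (p q : ℕ → ℕ) (k : ℕ) : Prop :=
  ∃ a b : ℕ, 1 ≤ a ∧ 1 ≤ b ∧ a + b = k ∧ k ≤ Spre p a ∧ k ≤ Spre q b

lemma M1 (hp : 2 ≤ p 1) (hq : 2 ≤ q 1) : QQ p q 2 := by
  refine ⟨1, 1, le_rfl, le_rfl, rfl, ?_, ?_⟩ <;> rw [Spre_one] <;> omega

lemma three_cases (hQ : QQ p q 3) : 3 ≤ p 1 ∨ 3 ≤ q 1 := by
  obtain ⟨a, b, ha, hb, hab, hSa, hSb⟩ := hQ
  rcases (by omega : a = 1 ∨ b = 1) with rfl | rfl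
  · left
    have := Spre_one p
    omega
  · right
    have := Spre_one q
    omega

/-- Step down by one, assuming a first part `≥ 3` is available. -/
lemma M4 (hm1 : Anti p) (hm2 : Anti q) (h3 : 3 ≤ p 1 ∨ 3 ≤ q 1) {k : ℕ} (hk : 3 ≤ k)
    (hQ : QQ p q (k + 1)) : QQ p q k := by
  obtain ⟨a, b, ha, hb, hab, hSa, hSb⟩ := hQ
  rcases Nat.lt_trichotomy a b with hlt | heq | hgt
  · refine ⟨a, b - 1, ha, by omega, by omega, by omega, ?_⟩
    by_contra hcontra
    push_neg at hcontra
    have := key1 hm2 2 (by omega : 1 ≤ b) hSb (by omega)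
    omega
  · rcases h3 with h3p | h3q
    · refine ⟨a - 1, b, by omega, hb, by omega, ?_, by omega⟩
      by_contra hcontra
      push_neg at hcontra
      have := key1' hm1 h3p (by omega : 2 ≤ a) hSa (by omega)
      omega
    · refine ⟨a, b - 1, ha, by omega, by omega, by omega, ?_⟩
      by_contra hcontra
      push_neg at hcontra
      have := key1' hm2 h3q (by omega : 2 ≤ b) hSb (by omega)
      omega
  · refine ⟨a - 1, b, by omega, hb, by omega, ?_, by omega⟩
    by_contra hcontra
    push_neg at hcontra
    have := key1 hm1 2 (by omega : 1 ≤ a) hSa (by omega)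
    omega

/-- Step down by two, unconditionally. -/
lemma M2 (hm1 : Anti p) (hm2 : Anti q) {k : ℕ} (hk : 2 ≤ k)
    (hQ : QQ p q (k + 2)) : QQ p q k := by
  obtain ⟨a, b, ha, hb, hab, hSa, hSb⟩ := hQ
  rcases (by omega : a = 1 ∨ 2 ≤ a) with rfl | ha2
  · -- a = 1, b = k + 1
    refine ⟨1, b - 2, le_rfl, by omega, by omega, by omega, ?_⟩
    by_contra hcontra
    push_neg at hcontra
    have := two_step hm2 (by omega : 2 ≤ b) hSb (by omega)
    omega
  rcases (by omega : b = 1 ∨ 2 ≤ b) with rfl | hb2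
  · refine ⟨a - 2, 1, by omega, le_rfl, by omega, ?_, by omega⟩
    by_contra hcontra
    push_neg at hcontra
    have := two_step hm1 (by omega : 2 ≤ a) hSa (by omega)
    omega
  -- now a, b ≥ 2
  by_cases hA : k ≤ Spre p (a - 1)
  · by_cases hB : k ≤ Spre q (b - 1)
    · exact ⟨a - 1, b - 1, by omega, by omega, by omega, hA, hB⟩
    · push_neg at hB
      have h3b := key1 hm2 3 (by omega : 1 ≤ b) hSb (by omega)
      refine ⟨a - 2, b, by omega, hb, by omega, ?_, by omega⟩
      by_contra hcontra
      push_neg at hcontra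
      have := two_step hm1 (by omega : 2 ≤ a) hSa (by omega)
      omega
  · push_neg at hA
    have h3a := key1 hm1 3 (by omega : 1 ≤ a) hSa (by omega)
    refine ⟨a, b - 2, ha, by omega, by omega, by omega, ?_⟩
    by_contra hcontra
    push_neg at hcontra
    have := two_step hm2 (by omega : 2 ≤ b) hSb (by omega)
    omega

lemma chi_mem {N : ℕ} (hp : IsPartitionOf N p) {k : ℕ} (hk1 : 1 ≤ k) (hkN : k ≤ N) :
    1 ≤ chiOf p k ∧ k ≤ Spre p (chiOf p k) := by
  have hNsum : Spre p N = N := hp.2.1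
  have hN : k ≤ Spre p N := by omega
  have hne : {i | 1 ≤ i ∧ k ≤ ∑ j ∈ Finset.Icc 1 i, p j}.Nonempty :=
    ⟨N, ⟨by omega, hN⟩⟩
  exact Nat.sInf_mem hne

lemma chi_le {k a : ℕ} (ha : 1 ≤ a) (h : k ≤ Spre p a) : chiOf p k ≤ a :=
  Nat.sInf_le ⟨ha, h⟩

lemma QQ_iff {N : ℕ} (hp : IsPartitionOf N p) (hq : IsPartitionOf N q)
    {k : ℕ} (hk1 : 2 ≤ k) (hkN : k ≤ N) :
    chiOf p k + chiOf q k ≤ k ↔ QQ p q k := by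
  obtain ⟨hc1, hc1S⟩ := chi_mem hp (by omega : 1 ≤ k) hkN
  obtain ⟨hc2, hc2S⟩ := chi_mem hq (by omega : 1 ≤ k) hkN
  constructor
  · intro h
    refine ⟨chiOf p k, k - chiOf p k, hc1, by omega, by omega, hc1S, ?_⟩
    have h2 : chiOf q k ≤ k - chiOf p k := by omega
    exact le_trans hc2S (Spre_mono q h2)
  · rintro ⟨a, b, ha, hb, hab, hSa, hSb⟩
    have h1 := chi_le (p := p) ha hSa
    have h2 := chi_le (p := q) hb hSb
    omega

end CenterAux

/-- the center-parameter indicator `b_k = 1 ⇔ χ¹_k + χ²_k ≤ k` on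
`{2,…,N}` is of initial-segment type or of alternating type. -/
theorem center_indicator_two_punctures_type
    (N : ℕ) (hN : 2 ≤ N) (p₁ p₂ χ₁ χ₂ : ℕ → ℕ)
    (h1 : IsVanishingOrderSeq N p₁ χ₁) (hp1 : 2 ≤ p₁ 1)
    (h2 : IsVanishingOrderSeq N p₂ χ₂) (hp2 : 2 ≤ p₂ 1) :
    (∃ l, 2 ≤ l ∧ ∀ k, 2 ≤ k → k ≤ N → (χ₁ k + χ₂ k ≤ k ↔ k ≤ l)) ∨
    (∃ l, 2 ≤ l ∧ ∀ k, 2 ≤ k → k ≤ N → (χ₁ k + χ₂ k ≤ k ↔ Even k ∧ k ≤ l)) := by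
  obtain ⟨hp1', hchi1⟩ := h1
  obtain ⟨hp2', hchi2⟩ := h2
  have hm1 : CenterAux.Anti p₁ := hp1'.1
  have hm2 : CenterAux.Anti p₂ := hp2'.1
  have hiff : ∀ k, 2 ≤ k → k ≤ N → (χ₁ k + χ₂ k ≤ k ↔ CenterAux.QQ p₁ p₂ k) := by
    intro k h2k hkN
    rw [hchi1 k (by omega) hkN, hchi2 k (by omega) hkN]
    exact CenterAux.QQ_iff hp1' hp2' h2k hkN
  have hQ2 : CenterAux.QQ p₁ p₂ 2 := CenterAux.M1 hp1 hp2
  set Bs : Set ℕ := {k | 2 ≤ k ∧ k ≤ N ∧ CenterAux.QQ p₁ p₂ k} with hBsdef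
  have h2B : 2 ∈ Bs := ⟨le_rfl, hN, hQ2⟩
  have hbdd : BddAbove Bs := ⟨N, fun x hx => hx.2.1⟩
  set l := sSup Bs with hldef
  have hlB : l ∈ Bs := Nat.sSup_mem ⟨2, h2B⟩ hbdd
  have hle : ∀ k ∈ Bs, k ≤ l := fun k hk => le_csSup hbdd hk
  by_cases hQ3 : CenterAux.QQ p₁ p₂ 3
  · left
    have h3cases := CenterAux.three_cases hQ3
    refine ⟨l, hlB.1, ?_⟩
    intro k h2k hkN
    rw [hiff k h2k hkN]
    constructor
    · intro h
      exact hle k ⟨h2k, hkN, h⟩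
    · intro hkl
      have step : ∀ m, 2 ≤ m → CenterAux.QQ p₁ p₂ (m + 1) → CenterAux.QQ p₁ p₂ m := by
        intro m hm hQ
        rcases (by omega : m = 2 ∨ 3 ≤ m) with rfl | h3m
        · exact hQ2
        · exact CenterAux.M4 hm1 hm2 h3cases h3m hQ
      have down : ∀ d m, 2 ≤ m → m + d = l → CenterAux.QQ p₁ p₂ m := by
        intro d
        induction d with
        | zero =>
          intro m hm hml
          have hml' : m = l := by omega
          rw [hml']
          exact hlB.2.2
        | succ n ih =>
          intro m hm hml
          exact step m hm (ih (m + 1) (by omega) (by omega))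
      exact down (l - k) k h2k (by omega)
  · right
    have no_odd : ∀ m, 3 ≤ m → m % 2 = 1 → CenterAux.QQ p₁ p₂ m → False := by
      intro m
      induction m using Nat.strong_induction_on with
      | _ m ih =>
        intro h3 hodd hQ
        rcases (by omega : m = 3 ∨ 5 ≤ m) with rfl | h5
        · exact hQ3 hQ
        · have hQ' : CenterAux.QQ p₁ p₂ (m - 2 + 2) := by
            rw [show m - 2 + 2 = m from by omega]
            exact hQ
          exact ih (m - 2) (by omega) (by omega) (by omega)
            (CenterAux.M2 hm1 hm2 (by omega : 2 ≤ m - 2) hQ')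
    have hl_even : l % 2 = 0 := by
      by_contra hodd
      exact no_odd l (by have := hlB.1; omega) (by omega) hlB.2.2
    refine ⟨l, hlB.1, ?_⟩
    intro k h2k hkN
    rw [hiff k h2k hkN]
    constructor
    · intro h
      have hkl := hle k ⟨h2k, hkN, h⟩
      have hkeven : k % 2 = 0 := by
        by_contra hodd
        exact no_odd k (by omega) (by omega) h
      exact ⟨Nat.even_iff.mpr hkeven, hkl⟩
    · rintro ⟨hkeven, hkl⟩
      have hke : k % 2 = 0 := Nat.even_iff.mp hkeven
      have down2 : ∀ d m, 2 ≤ m → m + 2 * d = l → CenterAux.QQ p₁ p₂ m := by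
        intro d
        induction d with
        | zero =>
          intro m hm hml
          have hml' : m = l := by omega
          rw [hml']
          exact hlB.2.2
        | succ n ih =>
          intro m hm hml
          exact CenterAux.M2 hm1 hm2 hm (ih (m + 2) (by omega) (by omega))
      obtain ⟨d, hd⟩ : ∃ d, k + 2 * d = l := ⟨(l - k) / 2, by omega⟩
      exact down2 d k h2k hd
end

section
/- Let N ≥ 2, n ≥ 2, and let χ⁽¹⁾,…,χ⁽ⁿ⁾ be the vanishing-order sequences of n nonzero partitions of N. Define b : {2,…,N} → {0,1} by b_k = 1 if and only if ∑_{i=1}^{n} χ⁽ⁱ⁾_k ≤ (n−1)k. Then b is of initial-segment type or of alternating type. -/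
namespace VOAux

def S (p : ℕ → ℕ) (i : ℕ) : ℕ := ∑ j ∈ Finset.Icc 1 i, p j

lemma S_N {N : ℕ} {p : ℕ → ℕ} (hp : IsPartitionOf N p) : S p N = N := hp.2.1

lemma S_mono (p : ℕ → ℕ) : Monotone (S p) := fun _ _ hij =>
  Finset.sum_le_sum_of_subset (Finset.Icc_subset_Icc_right hij)

lemma S_succ (p : ℕ → ℕ) (i : ℕ) (hi : 1 ≤ i) : S p i = S p (i - 1) + p i := by
  obtain ⟨j, rfl⟩ : ∃ j, i = j + 1 := ⟨i - 1, by omega⟩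
  simp [S, Finset.sum_Icc_succ_top (by omega : 1 ≤ j + 1)]

section OnePartition

variable {N : ℕ} {p : ℕ → ℕ}

lemma p_anti (hp : IsPartitionOf N p) {i j : ℕ} (hi : 1 ≤ i) (hij : i ≤ j) :
    p j ≤ p i := by
  induction j, hij using Nat.le_induction with
  | base => exact le_refl _
  | succ j hj ih => exact (hp.1 j (hi.trans hj)).trans ih

lemma S_stable (hp : IsPartitionOf N p) {i : ℕ} (hi : N ≤ i) : S p i = N := by
  have h : S p N = S p i := by
    refine Finset.sum_subset (Finset.Icc_subset_Icc_right hi) ?_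
    intro x hx hx'
    simp only [Finset.mem_Icc] at hx hx'
    exact hp.2.2 x (by omega)
  rw [← h, S_N hp]

lemma part_pos (hp : IsPartitionOf N p) {i : ℕ} (hi : 1 ≤ i) (hS : S p i < N) :
    1 ≤ p (i + 1) := by
  by_contra hcon
  push_neg at hcon
  have h0 : p (i + 1) = 0 := by omega
  have hiN : i < N := by
    by_contra hc; push_neg at hc; rw [S_stable hp hc] at hS; omega
  have h : S p i = S p N := by
    refine Finset.sum_subset (Finset.Icc_subset_Icc_right (by omega)) ?_
    intro x hx hx'
    simp only [Finset.mem_Icc] at hx hx'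
    have hx1 : i + 1 ≤ x := by omega
    have := p_anti hp (by omega : 1 ≤ i + 1) hx1
    omega
  rw [S_N hp] at h; omega

lemma S_ge (hp : IsPartitionOf N p) (h2 : 2 ≤ p 1) :
    ∀ i, 1 ≤ i → min (i + 1) N ≤ S p i := by
  intro i hi
  induction i with
  | zero => omega
  | succ i ih =>
    show min (i + 1 + 1) N ≤ S p (i + 1)
    rcases Nat.eq_zero_or_pos i with rfl | hi1
    · have h1 : S p (0 + 1) = p 1 := by norm_num [S]
      omega
    · have ih' := ih hi1
      rcases le_or_gt N (S p i) with hc | hc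
      · have hms : S p i ≤ S p (i + 1) := S_mono p (by omega); omega
      · have hp1 := part_pos hp hi1 hc
        have hstep : S p (i + 1) = S p i + p (i + 1) := by
          have := S_succ p (i + 1) (by omega); simpa using this
        omega

lemma chi_spec (hp : IsPartitionOf N p) {k : ℕ} (hk1 : 1 ≤ k) (hkN : k ≤ N) :
    1 ≤ chiOf p k ∧ k ≤ S p (chiOf p k) := by
  have hne : {i | 1 ≤ i ∧ k ≤ ∑ j ∈ Finset.Icc 1 i, p j}.Nonempty :=
    ⟨N, by omega, le_trans hkN (le_of_eq (S_N hp).symm)⟩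
  exact Nat.sInf_mem hne

lemma chi_le_of {k i : ℕ} (hi : 1 ≤ i) (hS : k ≤ S p i) : chiOf p k ≤ i :=
  Nat.sInf_le ⟨hi, hS⟩

lemma S_chi_pred (hp : IsPartitionOf N p) {k : ℕ} (hk1 : 1 ≤ k) (hkN : k ≤ N) :
    S p (chiOf p k - 1) < k := by
  by_contra hc
  push_neg at hc
  have h1 := (chi_spec hp hk1 hkN).1
  rcases Nat.eq_or_lt_of_le h1 with heq | hlt
  · have hz : chiOf p k - 1 = 0 := by omega
    rw [hz] at hc
    have h0 : S p 0 = 0 := by simp [S]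
    omega
  · have := chi_le_of (p := p) (by omega : 1 ≤ chiOf p k - 1) hc
    omega

lemma chi_mono (hp : IsPartitionOf N p) {k k' : ℕ} (hk1 : 1 ≤ k) (hkk' : k ≤ k')
    (hk'N : k' ≤ N) : chiOf p k ≤ chiOf p k' := by
  have hs := chi_spec hp (hk1.trans hkk') hk'N
  exact chi_le_of hs.1 (hkk'.trans hs.2)

lemma chi_upper (hp : IsPartitionOf N p) (h2 : 2 ≤ p 1) {k : ℕ} (hk2 : 2 ≤ k)
    (hkN : k ≤ N) : chiOf p k ≤ k - 1 := by
  have hS := S_ge hp h2 (k - 1) (by omega)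
  exact chi_le_of (by omega) (by omega)

lemma chi_two (hp : IsPartitionOf N p) (h2 : 2 ≤ p 1) (hN : 2 ≤ N) :
    chiOf p 2 = 1 := by
  have h1 : S p 1 = p 1 := by simp [S]
  have hle : chiOf p 2 ≤ 1 := chi_le_of le_rfl (by omega)
  have := (chi_spec hp (by omega : 1 ≤ 2) hN).1
  omega

lemma chi_step (hp : IsPartitionOf N p) {k : ℕ} (hk1 : 1 ≤ k) (hkN : k + 1 ≤ N) :
    chiOf p (k + 1) ≤ chiOf p k + 1 := by
  obtain ⟨hχ1, hχS⟩ := chi_spec hp hk1 (by omega)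
  rcases le_or_gt (k + 1) (S p (chiOf p k)) with hc | hc
  · exact (chi_le_of hχ1 hc).trans (by omega)
  · have hpos := part_pos hp hχ1 (by omega)
    refine chi_le_of (by omega) ?_
    have hs := S_succ p (chiOf p k + 1) (by omega)
    simp only [Nat.add_sub_cancel] at hs
    omega

lemma S_pred_ge (hp : IsPartitionOf N p) {i : ℕ} (hi : 1 ≤ i) :
    (i - 1) * p i ≤ S p (i - 1) := by
  have hb : ∀ j ∈ Finset.Icc 1 (i - 1), p i ≤ p j := by
    intro j hj
    simp only [Finset.mem_Icc] at hj
    exact p_anti hp hj.1 (by omega)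
  have h1 : (∑ _j ∈ Finset.Icc 1 (i - 1), p i) ≤ S p (i - 1) := Finset.sum_le_sum hb
  simpa [Finset.sum_const, Nat.card_Icc, mul_comm] using h1

lemma lemU (hp : IsPartitionOf N p) (h2 : 2 ≤ p 1) {k : ℕ} (hk2 : 2 ≤ k)
    (hkN : k + 2 ≤ N) (hu : chiOf p (k + 2) ≤ chiOf p k + 1) :
    2 * chiOf p k ≤ k + 1 := by
  obtain ⟨hi1, hSi⟩ := chi_spec hp (by omega : 1 ≤ k) (by omega : k ≤ N)
  have hpred : S p (chiOf p k - 1) < k := S_chi_pred hp (by omega) (by omega)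
  have hmono := chi_mono hp (by omega : 1 ≤ k) (by omega : k ≤ k + 1) (by omega)
  have hstep := chi_step hp (by omega : 1 ≤ k) (by omega)
  have hb := S_pred_ge hp hi1
  rcases eq_or_lt_of_le hmono with heq | hlt
  · -- flat at step k
    obtain ⟨_, hS1⟩ := chi_spec hp (by omega : 1 ≤ k + 1) (by omega)
    rw [← heq] at hS1
    have hsucc := S_succ p (chiOf p k) hi1
    have hp2 : 2 ≤ p (chiOf p k) := by omega
    have hx : (chiOf p k - 1) * 2 ≤ (chiOf p k - 1) * p (chiOf p k) :=
      Nat.mul_le_mul le_rfl hp2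
    have hy : (chiOf p k - 1) * 2 ≤ S p (chiOf p k - 1) := hx.trans hb
    omega
  · have hk1eq : chiOf p (k + 1) = chiOf p k + 1 := by omega
    have hm2 := chi_mono hp (by omega : 1 ≤ k + 1) (by omega : k + 1 ≤ k + 2) (by omega)
    have hk2eq : chiOf p (k + 2) = chiOf p k + 1 := by omega
    obtain ⟨_, hS2⟩ := chi_spec hp (by omega : 1 ≤ k + 2) (by omega)
    rw [hk2eq] at hS2
    have hpred1 := S_chi_pred hp (by omega : 1 ≤ k + 1) (by omega)
    rw [hk1eq] at hpred1
    simp only [Nat.add_sub_cancel] at hpred1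
    have hsucc2 := S_succ p (chiOf p k + 1) (by omega)
    simp only [Nat.add_sub_cancel] at hsucc2
    have hp2 : 2 ≤ p (chiOf p k + 1) := by omega
    have hanti : p (chiOf p k + 1) ≤ p (chiOf p k) := p_anti hp hi1 (Nat.le_succ _)
    have hx : (chiOf p k - 1) * 2 ≤ (chiOf p k - 1) * p (chiOf p k) :=
      Nat.mul_le_mul le_rfl (by omega)
    have hy : (chiOf p k - 1) * 2 ≤ S p (chiOf p k - 1) := hx.trans hb
    omega

lemma lemV (hp : IsPartitionOf N p) {k : ℕ} (hk2 : 2 ≤ k) (hkN : k + 2 ≤ N)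
    (hv : chiOf p (k + 2) ≤ chiOf p k) : 3 * chiOf p k ≤ k + 2 := by
  obtain ⟨hi1, hSi⟩ := chi_spec hp (by omega : 1 ≤ k) (by omega : k ≤ N)
  have hm := chi_mono hp (by omega : 1 ≤ k) (by omega : k ≤ k + 2) (by omega)
  have heq : chiOf p (k + 2) = chiOf p k := le_antisymm hv hm
  obtain ⟨_, hS2⟩ := chi_spec hp (by omega : 1 ≤ k + 2) (by omega)
  rw [heq] at hS2
  have hpred : S p (chiOf p k - 1) < k := S_chi_pred hp (by omega) (by omega)
  have hsucc := S_succ p (chiOf p k) hi1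
  have hp3 : 3 ≤ p (chiOf p k) := by omega
  have hb := S_pred_ge hp hi1
  have hx : (chiOf p k - 1) * 3 ≤ (chiOf p k - 1) * p (chiOf p k) :=
    Nat.mul_le_mul le_rfl hp3
  have hy : (chiOf p k - 1) * 3 ≤ S p (chiOf p k - 1) := hx.trans hb
  omega

lemma lemP4 (hp : IsPartitionOf N p) {k : ℕ} (hk : 3 ≤ k) (hkN : k + 1 ≤ N)
    (hflat : chiOf p (k + 1) = chiOf p k) :
    chiOf p k ≤ chiOf p (k - 2) + 1 := by
  by_contra hc
  push_neg at hc
  obtain ⟨hm1, hSm⟩ := chi_spec hp (by omega : 1 ≤ k - 2) (by omega)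
  have hi3 : 3 ≤ chiOf p k := by omega
  have hSi2 : k - 2 ≤ S p (chiOf p k - 2) :=
    hSm.trans (S_mono p (by omega : chiOf p (k - 2) ≤ chiOf p k - 2))
  have hpred : S p (chiOf p k - 1) < k := S_chi_pred hp (by omega : 1 ≤ k) (by omega)
  obtain ⟨_, hS1⟩ := chi_spec hp (by omega : 1 ≤ k + 1) (by omega)
  rw [hflat] at hS1
  have h1 := S_succ p (chiOf p k) (by omega)
  have h2 := S_succ p (chiOf p k - 1) (by omega)
  have h3 : chiOf p k - 1 - 1 = chiOf p k - 2 := by omega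
  rw [h3] at h2
  have hanti : p (chiOf p k) ≤ p (chiOf p k - 1) :=
    p_anti hp (by omega : 1 ≤ chiOf p k - 1) (by omega)
  omega

end OnePartition

section Multi

variable {N n : ℕ}

lemma sum_chi_two {p : Fin n → ℕ → ℕ} (hN : 2 ≤ N)
    (hp : ∀ i, IsPartitionOf N (p i)) (h2 : ∀ i, 2 ≤ p i 1) :
    ∑ i : Fin n, chiOf (p i) 2 = n := by
  have hone : ∀ i : Fin n, chiOf (p i) 2 = 1 := fun i => chi_two (hp i) (h2 i) hN
  simp [hone]

lemma lemL1 (hn : 2 ≤ n) {p : Fin n → ℕ → ℕ}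
    (hp : ∀ i, IsPartitionOf N (p i)) (h2 : ∀ i, 2 ≤ p i 1)
    {k : ℕ} (hk2 : 2 ≤ k) (hkN : k + 2 ≤ N)
    (hbad : (n - 1) * k < ∑ i : Fin n, chiOf (p i) k) :
    (n - 1) * (k + 2) < ∑ i : Fin n, chiOf (p i) (k + 2) := by
  by_contra hgood
  push_neg at hgood
  classical
  set u : Fin n → ℤ := fun i => if chiOf (p i) (k + 2) ≤ chiOf (p i) k + 1 then 1 else 0 with hu
  set v : Fin n → ℤ := fun i => if chiOf (p i) (k + 2) ≤ chiOf (p i) k then 1 else 0 with hv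
  have key1 : ∀ i : Fin n, (chiOf (p i) (k + 2) : ℤ) + u i + v i = (chiOf (p i) k : ℤ) + 2 := by
    intro i
    have hs1 := chi_step (hp i) (by omega : 1 ≤ k) (by omega)
    have hs2 : chiOf (p i) (k + 2) ≤ chiOf (p i) (k + 1) + 1 :=
      chi_step (hp i) (by omega : 1 ≤ k + 1) (by omega)
    have hm1 := chi_mono (hp i) (by omega : 1 ≤ k) (by omega : k ≤ k + 1) (by omega)
    have hm2 : chiOf (p i) (k + 1) ≤ chiOf (p i) (k + 2) :=
      chi_mono (hp i) (by omega : 1 ≤ k + 1) (by omega : k + 1 ≤ k + 2) (by omega)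
    simp only [hu, hv]
    by_cases h1 : chiOf (p i) (k + 2) ≤ chiOf (p i) k + 1
    · by_cases hv1 : chiOf (p i) (k + 2) ≤ chiOf (p i) k
      · simp only [if_pos h1, if_pos hv1]; push_cast; omega
      · simp only [if_pos h1, if_neg hv1]; push_cast; omega
    · have hv1 : ¬ chiOf (p i) (k + 2) ≤ chiOf (p i) k := fun hc => h1 (hc.trans (by omega))
      simp only [if_neg h1, if_neg hv1]; push_cast; omega
  have key2 : ∀ i : Fin n,
      6 * (chiOf (p i) k : ℤ) + (3 * (k : ℤ) - 9) * u i + ((k : ℤ) - 1) * v i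
        ≤ 6 * ((k : ℤ) - 1) := by
    intro i
    have hle : chiOf (p i) k ≤ k - 1 := chi_upper (hp i) (h2 i) hk2 (by omega)
    simp only [hu, hv]
    by_cases h1 : chiOf (p i) (k + 2) ≤ chiOf (p i) k + 1
    · by_cases hv1 : chiOf (p i) (k + 2) ≤ chiOf (p i) k
      · have hV := lemV (hp i) hk2 hkN hv1
        simp only [if_pos h1, if_pos hv1, mul_one]
        omega
      · have hU := lemU (hp i) (h2 i) hk2 hkN h1
        simp only [if_pos h1, if_neg hv1, mul_one, mul_zero, add_zero]
        omega
    · have hv1 : ¬ chiOf (p i) (k + 2) ≤ chiOf (p i) k := fun hc => h1 (hc.trans (by omega))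
      simp only [if_neg h1, if_neg hv1, mul_zero, add_zero]
      omega
  have hpt : ∀ i : Fin n, 0 ≤ u i ∧ u i ≤ 1 ∧ 0 ≤ v i ∧ v i ≤ u i := by
    intro i
    simp only [hu, hv]
    by_cases h1 : chiOf (p i) (k + 2) ≤ chiOf (p i) k + 1
    · by_cases hv1 : chiOf (p i) (k + 2) ≤ chiOf (p i) k <;> simp [h1, hv1]
    · have hv1 : ¬ chiOf (p i) (k + 2) ≤ chiOf (p i) k := fun hc => h1 (hc.trans (by omega))
      simp [h1, hv1]
  have hsum1 : (∑ i : Fin n, (chiOf (p i) (k + 2) : ℤ)) + (∑ i, u i) + (∑ i, v i)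
      = (∑ i : Fin n, (chiOf (p i) k : ℤ)) + 2 * n := by
    have hcg : (∑ i : Fin n, ((chiOf (p i) (k + 2) : ℤ) + u i + v i))
        = ∑ i : Fin n, ((chiOf (p i) k : ℤ) + 2) := Finset.sum_congr rfl fun i _ => key1 i
    rw [Finset.sum_add_distrib, Finset.sum_add_distrib, Finset.sum_add_distrib] at hcg
    simp only [Finset.sum_const, Finset.card_univ, Fintype.card_fin, nsmul_eq_mul] at hcg
    linarith
  have hsum2 : 6 * (∑ i : Fin n, (chiOf (p i) k : ℤ)) + (3 * (k : ℤ) - 9) * (∑ i, u i)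
      + ((k : ℤ) - 1) * (∑ i, v i) ≤ 6 * (n : ℤ) * ((k : ℤ) - 1) := by
    have hcg := Finset.sum_le_sum (fun i (_ : i ∈ Finset.univ) => key2 i)
    rw [Finset.sum_add_distrib, Finset.sum_add_distrib, ← Finset.mul_sum, ← Finset.mul_sum,
      ← Finset.mul_sum] at hcg
    simp only [Finset.sum_const, Finset.card_univ, Fintype.card_fin, nsmul_eq_mul] at hcg
    linarith
  have hUle : (∑ i, u i) ≤ (n : ℤ) := by
    calc (∑ i, u i) ≤ ∑ _i : Fin n, (1 : ℤ) := Finset.sum_le_sum fun i _ => (hpt i).2.1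
    _ = n := by simp
  have hV0 : 0 ≤ ∑ i, v i := Finset.sum_nonneg fun i _ => (hpt i).2.2.1
  have hVU : (∑ i, v i) ≤ ∑ i, u i := Finset.sum_le_sum fun i _ => (hpt i).2.2.2
  have hbadZ : ((n : ℤ) - 1) * k + 1 ≤ ∑ i : Fin n, (chiOf (p i) k : ℤ) := by
    have h' : (((n - 1) * k : ℕ) : ℤ) < ∑ i : Fin n, (chiOf (p i) k : ℤ) := by
      exact_mod_cast hbad
    push_cast [Nat.cast_sub (by omega : 1 ≤ n)] at h'
    linarith
  have hgoodZ : (∑ i : Fin n, (chiOf (p i) (k + 2) : ℤ)) ≤ ((n : ℤ) - 1) * ((k : ℤ) + 2) := by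
    have h' : ((∑ i : Fin n, chiOf (p i) (k + 2) : ℕ) : ℤ) ≤ (((n - 1) * (k + 2) : ℕ) : ℤ) := by
      exact_mod_cast hgood
    push_cast [Nat.cast_sub (by omega : 1 ≤ n)] at h'
    linarith
  have hUV3 : 3 ≤ (∑ i, u i) + (∑ i, v i) := by linarith
  have h6 : ((k : ℤ) - 1) * (3 * (∑ i, u i) + (∑ i, v i)) ≤ ((k : ℤ) - 1) * 6 := by
    linarith
  have hkpos : (0 : ℤ) < (k : ℤ) - 1 := by
    have : (2 : ℤ) ≤ (k : ℤ) := by exact_mod_cast hk2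
    linarith
  have h7 : 3 * (∑ i, u i) + (∑ i, v i) ≤ 6 := le_of_mul_le_mul_left h6 hkpos
  omega

lemma lemL3 (hn : 2 ≤ n) {p : Fin n → ℕ → ℕ}
    (hp : ∀ i, IsPartitionOf N (p i)) (h2 : ∀ i, 2 ≤ p i 1)
    {k : ℕ} (hk4 : 4 ≤ k) (hkN : k + 1 ≤ N)
    (hbad : (n - 1) * k < ∑ i : Fin n, chiOf (p i) k)
    (hgood : (∑ i : Fin n, chiOf (p i) (k + 1)) ≤ (n - 1) * (k + 1)) :
    (n - 1) * (k - 2) < ∑ i : Fin n, chiOf (p i) (k - 2) := by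
  obtain ⟨j, rfl⟩ : ∃ j, k = j + 4 := ⟨k - 4, by omega⟩
  have hred : j + 4 - 2 = j + 2 := by omega
  rw [hred]
  classical
  set e : Fin n → ℤ := fun i => if chiOf (p i) (j + 5) ≤ chiOf (p i) (j + 4) then 1 else 0 with he
  have key1 : ∀ i : Fin n, (chiOf (p i) (j + 5) : ℤ) + e i = (chiOf (p i) (j + 4) : ℤ) + 1 := by
    intro i
    have hs1 : chiOf (p i) (j + 5) ≤ chiOf (p i) (j + 4) + 1 :=
      chi_step (hp i) (by omega : 1 ≤ j + 4) (by omega)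
    have hm1 : chiOf (p i) (j + 4) ≤ chiOf (p i) (j + 5) :=
      chi_mono (hp i) (by omega : 1 ≤ j + 4) (by omega : j + 4 ≤ j + 5) (by omega)
    simp only [he]
    by_cases h1 : chiOf (p i) (j + 5) ≤ chiOf (p i) (j + 4)
    · simp only [if_pos h1]; push_cast; omega
    · simp only [if_neg h1]; push_cast; omega
  have key2 : ∀ i : Fin n, (chiOf (p i) (j + 4) : ℤ) + e i ≤ (chiOf (p i) (j + 2) : ℤ) + 2 := by
    intro i
    have hs1 : chiOf (p i) (j + 3) ≤ chiOf (p i) (j + 2) + 1 :=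
      chi_step (hp i) (by omega : 1 ≤ j + 2) (by omega)
    have hs2 : chiOf (p i) (j + 4) ≤ chiOf (p i) (j + 3) + 1 :=
      chi_step (hp i) (by omega : 1 ≤ j + 3) (by omega)
    simp only [he]
    by_cases h1 : chiOf (p i) (j + 5) ≤ chiOf (p i) (j + 4)
    · have hm : chiOf (p i) (j + 4) ≤ chiOf (p i) (j + 5) :=
        chi_mono (hp i) (by omega : 1 ≤ j + 4) (by omega : j + 4 ≤ j + 5) (by omega)
      have hflat : chiOf (p i) (j + 5) = chiOf (p i) (j + 4) := le_antisymm h1 hm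
      have hp4 : chiOf (p i) (j + 4) ≤ chiOf (p i) (j + 4 - 2) + 1 :=
        lemP4 (hp i) (by omega : 3 ≤ j + 4) (by omega) hflat
      rw [hred] at hp4
      simp only [if_pos h1]; push_cast; omega
    · simp only [if_neg h1]; push_cast; omega
  have hsum1 : (∑ i : Fin n, (chiOf (p i) (j + 5) : ℤ)) + (∑ i, e i)
      = (∑ i : Fin n, (chiOf (p i) (j + 4) : ℤ)) + n := by
    have hcg : (∑ i : Fin n, ((chiOf (p i) (j + 5) : ℤ) + e i))
        = ∑ i : Fin n, ((chiOf (p i) (j + 4) : ℤ) + 1) := Finset.sum_congr rfl fun i _ => key1 i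
    rw [Finset.sum_add_distrib, Finset.sum_add_distrib] at hcg
    simp only [Finset.sum_const, Finset.card_univ, Fintype.card_fin, nsmul_eq_mul] at hcg
    linarith
  have hsum2 : (∑ i : Fin n, (chiOf (p i) (j + 4) : ℤ)) + (∑ i, e i)
      ≤ (∑ i : Fin n, (chiOf (p i) (j + 2) : ℤ)) + 2 * n := by
    have hcg := Finset.sum_le_sum (fun i (_ : i ∈ Finset.univ) => key2 i)
    rw [Finset.sum_add_distrib, Finset.sum_add_distrib] at hcg
    simp only [Finset.sum_const, Finset.card_univ, Fintype.card_fin, nsmul_eq_mul] at hcg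
    linarith
  have hbadZ : ((n : ℤ) - 1) * ((j : ℤ) + 4) + 1 ≤ ∑ i : Fin n, (chiOf (p i) (j + 4) : ℤ) := by
    have h' : (((n - 1) * (j + 4) : ℕ) : ℤ) < ∑ i : Fin n, (chiOf (p i) (j + 4) : ℤ) := by
      exact_mod_cast hbad
    push_cast [Nat.cast_sub (by omega : 1 ≤ n)] at h'
    linarith
  have hgoodZ : (∑ i : Fin n, (chiOf (p i) (j + 5) : ℤ)) ≤ ((n : ℤ) - 1) * ((j : ℤ) + 5) := by
    have h' : ((∑ i : Fin n, chiOf (p i) (j + 4 + 1) : ℕ) : ℤ)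
        ≤ (((n - 1) * (j + 4 + 1) : ℕ) : ℤ) := by exact_mod_cast hgood
    push_cast [Nat.cast_sub (by omega : 1 ≤ n)] at h'
    convert h' using 2 <;> push_cast <;> ring_nf
  have hfin : ((n : ℤ) - 1) * ((j : ℤ) + 2) + 1 ≤ ∑ i : Fin n, (chiOf (p i) (j + 2) : ℤ) := by
    linarith
  rw [← Nat.cast_lt (α := ℤ)]
  push_cast [Nat.cast_sub (by omega : 1 ≤ n)]
  linarith

end Multi

end VOAux

/-- for `n` nonzero partitions, the center-parameter indicator
`b_k = 1 ⇔ ∑ᵢ χ⁽ⁱ⁾_k ≤ (n−1)k` on `{2,…,N}` is of initial-segment type or of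
alternating type. -/
theorem center_indicator_type
    (N n : ℕ) (hN : 2 ≤ N) (hn : 2 ≤ n)
    (p χ : Fin n → ℕ → ℕ)
    (h : ∀ i, IsVanishingOrderSeq N (p i) (χ i) ∧ 2 ≤ p i 1) :
    (∃ l, 2 ≤ l ∧ ∀ k, 2 ≤ k → k ≤ N → ((∑ i, χ i k) ≤ (n - 1) * k ↔ k ≤ l)) ∨
    (∃ l, 2 ≤ l ∧ ∀ k, 2 ≤ k → k ≤ N → ((∑ i, χ i k) ≤ (n - 1) * k ↔ Even k ∧ k ≤ l)) := by
  classical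
  have hp : ∀ i, IsPartitionOf N (p i) := fun i => (h i).1.1
  have hpp : ∀ i, 2 ≤ p i 1 := fun i => (h i).2
  have hχ : ∀ (i : Fin n) (k : ℕ), 1 ≤ k → k ≤ N → χ i k = chiOf (p i) k :=
    fun i => (h i).1.2
  have hbridge : ∀ k, 2 ≤ k → k ≤ N →
      (∑ i, χ i k) = ∑ i : Fin n, chiOf (p i) k :=
    fun k h1 h2' => Finset.sum_congr rfl fun i _ => hχ i k (by omega) h2'
  set good : ℕ → Prop := fun k => (∑ i : Fin n, chiOf (p i) k) ≤ (n - 1) * k with hgood_def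
  have hGiff : ∀ k, good k ↔ (∑ i : Fin n, chiOf (p i) k) ≤ (n - 1) * k := by
    intro k; rw [hgood_def]
  have hg2 : good 2 := by
    rw [hGiff, VOAux.sum_chi_two hN hp hpp]
    omega
  have hL1 : ∀ k, 2 ≤ k → k + 2 ≤ N → ¬ good k → ¬ good (k + 2) := by
    intro k h1 h2' hb hg
    rw [hGiff] at hb hg
    have := VOAux.lemL1 hn hp hpp h1 h2' (by omega)
    omega
  have hL3 : ∀ k, 4 ≤ k → k + 1 ≤ N → ¬ good k → good (k + 1) → ¬ good (k - 2) := by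
    intro k h1 h2' hb hg hgk2
    rw [hGiff] at hb hg hgk2
    have := VOAux.lemL3 hn hp hpp h1 h2' (by omega) hg
    omega
  have hdown : ∀ d j, 2 ≤ j → j + 2 * d ≤ N → good (j + 2 * d) → good j := by
    intro d
    induction d with
    | zero => intro j h1 h2' hg; simpa using hg
    | succ d ih =>
      intro j h1 h2' hg
      have h3 : j + 2 * (d + 1) = (j + 2 * d) + 2 := by ring
      rw [h3] at hg h2'
      have hgd : good (j + 2 * d) := by
        by_contra hb
        exact hL1 (j + 2 * d) (by omega) h2' hb hg
      exact ih j h1 (by omega) hgd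
  by_cases hall : ∀ k, 2 ≤ k → k ≤ N → good k
  · left
    refine ⟨N, hN, fun k hk2 hkN' => ?_⟩
    rw [hbridge k hk2 hkN']
    exact ⟨fun _ => hkN', fun _ => (hGiff k).mp (hall k hk2 hkN')⟩
  · push_neg at hall
    obtain ⟨k0, hk01, hk02, hk03⟩ := hall
    have hex : ∃ k, 2 ≤ k ∧ k ≤ N ∧ ¬ good k := ⟨k0, hk01, hk02, hk03⟩
    obtain ⟨a, ha2, haN, hba, hmin⟩ :
        ∃ a, 2 ≤ a ∧ a ≤ N ∧ ¬ good a ∧ ∀ k, 2 ≤ k → k < a → good k := by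
      refine ⟨Nat.find hex, (Nat.find_spec hex).1, (Nat.find_spec hex).2.1,
        (Nat.find_spec hex).2.2, ?_⟩
      intro k h1 h2'
      by_contra hb
      have hfN : Nat.find hex ≤ N := (Nat.find_spec hex).2.1
      have hle : Nat.find hex ≤ k :=
        Nat.find_le (show 2 ≤ k ∧ k ≤ N ∧ ¬ good k from ⟨h1, by omega, hb⟩)
      omega
    have ha3 : 3 ≤ a := by
      have : a ≠ 2 := fun hc => hba (hc ▸ hg2)
      omega
    by_cases ha4 : 4 ≤ a
    · -- initial-segment type with l = a - 1
      left
      refine ⟨a - 1, by omega, ?_⟩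
      have hbadup : ∀ k, k ≤ N → a ≤ k → ¬ good k := by
        intro k
        induction k using Nat.strong_induction_on with
        | _ k IH =>
          intro hkN' hak hgk
          rcases Nat.lt_or_ge k (a + 2) with hk | hk
          · rcases Nat.eq_or_lt_of_le hak with heq | hlt
            · rw [← heq] at hgk; exact hba hgk
            · have hk1 : k = a + 1 := by omega
              subst hk1
              exact hL3 a ha4 (by omega) hba hgk (hmin (a - 2) (by omega) (by omega))
          · have h3 : (k - 2) + 2 * 1 = k := by omega
            have hgk2 : good (k - 2) :=
              hdown 1 (k - 2) (by omega) (by omega) (by rw [h3]; exact hgk)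
            exact IH (k - 2) (by omega) (by omega) (by omega) hgk2
      intro k hk2 hkN'
      rw [hbridge k hk2 hkN']
      constructor
      · intro hgk
        by_contra hc
        exact hbadup k hkN' (by omega) ((hGiff k).mpr hgk)
      · intro hk
        exact (hGiff k).mp (hmin k hk2 (by omega))
    · -- a = 3 : alternating type
      have ha3' : a = 3 := by omega
      have hb3 : ¬ good 3 := ha3' ▸ hba
      right
      have hN3 : 3 ≤ N := by omega
      have hodd : ∀ d, 3 + 2 * d ≤ N → ¬ good (3 + 2 * d) := by
        intro d
        induction d with
        | zero => intro _; simpa using hb3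
        | succ d ih =>
          intro hle
          have h3 : 3 + 2 * (d + 1) = (3 + 2 * d) + 2 := by ring
          rw [h3]
          exact hL1 (3 + 2 * d) (by omega) (by omega) (ih (by omega))
      set Es := (Finset.Icc 2 N).filter (fun k => Even k ∧ good k) with hEs
      have hmemEs : ∀ x, x ∈ Es ↔ (2 ≤ x ∧ x ≤ N) ∧ Even x ∧ good x := by
        intro x
        rw [hEs, Finset.mem_filter, Finset.mem_Icc]
      have h2mem : 2 ∈ Es := (hmemEs 2).mpr ⟨⟨le_refl 2, hN⟩, even_two, hg2⟩
      have hEne : Es.Nonempty := ⟨2, h2mem⟩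
      set l := Es.max' hEne with hl
      obtain ⟨⟨hl2, hlN⟩, hlev, hlg⟩ := (hmemEs l).mp (Es.max'_mem hEne)
      refine ⟨l, hl2, ?_⟩
      intro k hk2 hkN'
      rw [hbridge k hk2 hkN']
      constructor
      · intro hgk'
        have hgk : good k := (hGiff k).mpr hgk'
        have hkev : Even k := by
          by_contra hkodd
          obtain ⟨d, rfl⟩ : ∃ d, k = 3 + 2 * d := by
            rw [Nat.even_iff] at hkodd
            exact ⟨(k - 3) / 2, by omega⟩
          exact hodd d hkN' hgk
        refine ⟨hkev, ?_⟩
        exact Es.le_max' k ((hmemEs k).mpr ⟨⟨hk2, hkN'⟩, hkev, hgk⟩)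
      · rintro ⟨hkev, hkl⟩
        obtain ⟨d, hd⟩ : ∃ d, l = k + 2 * d := by
          rcases hkev with ⟨x, hx⟩
          rcases hlev with ⟨y, hy⟩
          exact ⟨y - x, by omega⟩
        exact (hGiff k).mp (hdown d k hk2 (by omega) (by rw [← hd]; exact hlg))
end

section
/- Let N ≥ 2 and let χ¹, χ² be the vanishing-order sequences of two nonzero partitions of N. If χ¹_N + χ²_N ≤ N and there exists k ∈ {2,…,N} with χ¹_k + χ²_k > k, then N is even and χ¹_k = χ²_k = ⌈k/2⌉ for all k ∈ {1,…,N}, i.e., both partitions equal [2^{N/2}]. -/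
namespace TwoBlocksAux

def S (p : ℕ → ℕ) (i : ℕ) : ℕ := ∑ j ∈ Finset.Icc 1 i, p j

lemma S_split (p : ℕ → ℕ) {i j : ℕ} (h : i ≤ j) :
    S p j = S p i + ∑ l ∈ Finset.Ioc i j, p l := by
  unfold S
  rw [show Finset.Icc 1 j = Finset.Ioc 0 j from Finset.Icc_add_one_left_eq_Ioc 0 j,
      show Finset.Icc 1 i = Finset.Ioc 0 i from Finset.Icc_add_one_left_eq_Ioc 0 i,
      Finset.sum_Ioc_consecutive _ (Nat.zero_le i) h]

lemma S_mono (p : ℕ → ℕ) {i j : ℕ} (h : i ≤ j) : S p i ≤ S p j := by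
  rw [S_split p h]; exact Nat.le_add_right _ _

lemma S_succ (p : ℕ → ℕ) (i : ℕ) : S p (i + 1) = S p i + p (i + 1) := by
  unfold S
  rw [Finset.sum_Icc_succ_top (by omega : 1 ≤ i + 1)]

lemma parts_le {p : ℕ → ℕ} (hmono : ∀ i, 1 ≤ i → p (i + 1) ≤ p i)
    {i j : ℕ} (h1 : 1 ≤ i) (hij : i ≤ j) : p j ≤ p i := by
  induction j, hij using Nat.le_induction with
  | base => exact le_refl _
  | succ n hn ih => exact le_trans (hmono n (le_trans h1 hn)) ih

lemma S_lb {N : ℕ} {p : ℕ → ℕ} (hp : IsPartitionOf N p) (hp1 : 2 ≤ p 1) (hN : 2 ≤ N) :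
    ∀ i, 1 ≤ i → min N (i + 1) ≤ S p i := by
  obtain ⟨hmono, hsum, -⟩ := hp
  have hSN : S p N = N := hsum
  intro i hi
  induction i, hi using Nat.le_induction with
  | base =>
    have : S p 1 = p 1 := by unfold S; simp
    omega
  | succ n hn ih =>
    have hstep := S_succ p n
    rcases le_or_gt N (S p n) with h | h
    · omega
    · have hnN : n < N := by
        by_contra hc
        have := S_mono p (show N ≤ n by omega)
        omega
      have hpos : 1 ≤ p (n + 1) := by
        by_contra hc
        have hz : ∀ l ∈ Finset.Ioc n N, p l = 0 := by
          intro l hl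
          rw [Finset.mem_Ioc] at hl
          have := parts_le hmono (show 1 ≤ n + 1 by omega) (show n + 1 ≤ l by omega)
          omega
        have hsp := S_split p (le_of_lt hnN)
        rw [Finset.sum_eq_zero hz] at hsp
        omega
      omega

lemma chi_set_eq (p : ℕ → ℕ) (k : ℕ) :
    {i | 1 ≤ i ∧ k ≤ ∑ j ∈ Finset.Icc 1 i, p j} = {i | 1 ≤ i ∧ k ≤ S p i} := rfl

lemma chi_spec {N : ℕ} {p : ℕ → ℕ} (hp : IsPartitionOf N p) {k : ℕ}
    (hk1 : 1 ≤ k) (hkN : k ≤ N) :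
    1 ≤ chiOf p k ∧ k ≤ S p (chiOf p k) ∧ chiOf p k ≤ N := by
  have hSN : S p N = N := hp.2.1
  have hmem : N ∈ {i | 1 ≤ i ∧ k ≤ S p i} := ⟨by omega, by omega⟩
  have h1 := Nat.sInf_mem (⟨N, hmem⟩ : {i | 1 ≤ i ∧ k ≤ S p i}.Nonempty)
  exact ⟨h1.1, h1.2, Nat.sInf_le hmem⟩

/-- monotone in k -/
lemma chi_mono {N : ℕ} {p : ℕ → ℕ} (hp : IsPartitionOf N p) {k k' : ℕ}
    (hk1 : 1 ≤ k) (hkk' : k ≤ k') (hk'N : k' ≤ N) : chiOf p k ≤ chiOf p k' := by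
  obtain ⟨h1, h2, -⟩ := chi_spec hp (by omega : 1 ≤ k') hk'N
  have hrfl : S p (chiOf p k') = ∑ j ∈ Finset.Icc 1 (chiOf p k'), p j := rfl
  exact Nat.sInf_le ⟨h1, by omega⟩

lemma chi_ub {N : ℕ} {p : ℕ → ℕ} (hp : IsPartitionOf N p) (hp1 : 2 ≤ p 1) (hN : 2 ≤ N)
    {k : ℕ} (hk2 : 2 ≤ k) (hkN : k ≤ N) : chiOf p k + 1 ≤ k := by
  have h := S_lb hp hp1 hN (k - 1) (by omega)
  have hrfl : S p (k - 1) = ∑ j ∈ Finset.Icc 1 (k - 1), p j := rfl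
  have : chiOf p k ≤ k - 1 := Nat.sInf_le ⟨by omega, by omega⟩
  omega

lemma chi_pred {N : ℕ} {p : ℕ → ℕ} (hp : IsPartitionOf N p) {k : ℕ}
    (hk1 : 1 ≤ k) (hkN : k ≤ N) (ha2 : 2 ≤ chiOf p k) :
    S p (chiOf p k - 1) + 1 ≤ k := by
  have h := Nat.notMem_of_lt_sInf (show chiOf p k - 1 < chiOf p k by omega)
  rw [chi_set_eq] at h
  simp only [Set.mem_setOf_eq, not_and, not_le] at h
  have := h (by omega : 1 ≤ chiOf p k - 1)
  omega

lemma S_N_of_chi {N : ℕ} {p : ℕ → ℕ} (hp : IsPartitionOf N p) (hN : 1 ≤ N) :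
    S p (chiOf p N) = N := by
  obtain ⟨-, h2, h3⟩ := chi_spec hp hN le_rfl
  have := S_mono p h3
  have hSN : S p N = N := hp.2.1
  omega

/-- Per-partition structural facts at a witness k with chiOf p k ≥ 2. -/
lemma side {N k : ℕ} {p : ℕ → ℕ} (hN : 2 ≤ N) (hp : IsPartitionOf N p) (hp1 : 2 ≤ p 1)
    (hk2 : 2 ≤ k) (hkN : k ≤ N) (ha2 : 2 ≤ chiOf p k) :
    ∃ A M c s t, chiOf p k = A + 1 ∧ chiOf p N = A + M ∧ 1 ≤ A ∧ 1 ≤ M ∧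
      s = ∑ j ∈ Finset.Icc 1 A, p j ∧ t = ∑ j ∈ Finset.Ioc A (A + M), p j ∧
      c = p (A + 1) ∧
      s + 1 ≤ k ∧ A * c ≤ s ∧ t ≤ M * c ∧ s + t = N := by
  set a := chiOf p k with ha
  set m := chiOf p N with hm
  have ham : a ≤ m := chi_mono hp (by omega) hkN le_rfl
  refine ⟨a - 1, m - (a - 1), p a, S p (a - 1), ∑ j ∈ Finset.Ioc (a - 1) m, p j,
    by omega, by omega, by omega, by omega, rfl, ?_, by congr 1; omega,
    chi_pred hp (by omega) hkN ha2, ?_, ?_, ?_⟩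
  · rw [show a - 1 + (m - (a - 1)) = m by omega]
  · -- A * c ≤ s
    calc (a - 1) * p a = ∑ _j ∈ Finset.Icc 1 (a - 1), p a := by
          rw [Finset.sum_const, smul_eq_mul, Nat.card_Icc]
          congr 1
      _ ≤ ∑ j ∈ Finset.Icc 1 (a - 1), p j := by
          apply Finset.sum_le_sum
          intro j hj
          rw [Finset.mem_Icc] at hj
          exact parts_le hp.1 hj.1 (by omega)
  · -- t ≤ M * c
    calc ∑ j ∈ Finset.Ioc (a - 1) m, p j ≤ ∑ _j ∈ Finset.Ioc (a - 1) m, p a := by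
          apply Finset.sum_le_sum
          intro j hj
          rw [Finset.mem_Ioc] at hj
          exact parts_le hp.1 (by omega) (by omega)
      _ = (m - (a - 1)) * p a := by
          rw [Finset.sum_const, smul_eq_mul, Nat.card_Ioc]
  · -- s + t = N
    have := S_split p (show a - 1 ≤ m by omega)
    have hSm : S p m = N := S_N_of_chi hp (by omega)
    omega



lemma parts_const {p : ℕ → ℕ} {A M c : ℕ}
    (h1 : ∀ j ∈ Finset.Icc 1 A, c ≤ p j)
    (h2 : ∀ j ∈ Finset.Ioc A (A + M), p j ≤ c)
    (e1 : ∑ j ∈ Finset.Icc 1 A, p j = A * c)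
    (e2 : ∑ j ∈ Finset.Ioc A (A + M), p j = M * c) :
    ∀ j, 1 ≤ j → j ≤ A + M → p j = c := by
  have c1 : ∑ _j ∈ Finset.Icc 1 A, c = A * c := by
    rw [Finset.sum_const, smul_eq_mul, Nat.card_Icc]
    congr 1
  have c2 : ∑ _j ∈ Finset.Ioc A (A + M), c = M * c := by
    rw [Finset.sum_const, smul_eq_mul, Nat.card_Ioc]
    congr 1
    omega
  have k1 := (Finset.sum_eq_sum_iff_of_le h1).mp (c1.trans e1.symm)
  have k2 := (Finset.sum_eq_sum_iff_of_le h2).mp (e2.trans c2.symm)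
  intro j hj1 hj2
  rcases le_or_gt j A with h | h
  · exact (k1 j (Finset.mem_Icc.mpr ⟨hj1, h⟩)).symm
  · exact k2 j (Finset.mem_Ioc.mpr ⟨h, hj2⟩)

lemma chi_const_two {N m : ℕ} {p : ℕ → ℕ} (hp : IsPartitionOf N p) (hm1 : 1 ≤ m)
    (hall : ∀ j, 1 ≤ j → j ≤ m → p j = 2) (hNm : N = 2 * m)
    {k : ℕ} (hk1 : 1 ≤ k) (hkN : k ≤ N) : chiOf p k = (k + 1) / 2 := by
  set t := (k + 1) / 2 with ht
  have ht1 : 1 ≤ t := by omega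
  have htm : t ≤ m := by omega
  have hSt : ∑ j ∈ Finset.Icc 1 t, p j = 2 * t := by
    calc ∑ j ∈ Finset.Icc 1 t, p j = ∑ _j ∈ Finset.Icc 1 t, 2 :=
          Finset.sum_congr rfl (fun j hj => by
            rw [Finset.mem_Icc] at hj; exact hall j hj.1 (le_trans hj.2 htm))
      _ = 2 * t := by
          rw [Finset.sum_const, smul_eq_mul, Nat.card_Icc]
          omega
  have hub : chiOf p k ≤ t := Nat.sInf_le ⟨ht1, by omega⟩
  have hlb : t ≤ chiOf p k := by
    obtain ⟨h1, h2, h3⟩ := chi_spec hp hk1 hkN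
    have hrfl : S p (chiOf p k) = ∑ j ∈ Finset.Icc 1 (chiOf p k), p j := rfl
    have hle : ∑ j ∈ Finset.Icc 1 (chiOf p k), p j ≤ 2 * chiOf p k := by
      calc ∑ j ∈ Finset.Icc 1 (chiOf p k), p j
          ≤ ∑ _j ∈ Finset.Icc 1 (chiOf p k), 2 := by
            apply Finset.sum_le_sum
            intro j hj
            rw [Finset.mem_Icc] at hj
            rcases le_or_gt j m with h | h
            · exact le_of_eq (hall j hj.1 h)
            · calc p j ≤ p m := parts_le hp.1 hm1 (le_of_lt h)
                _ = 2 := hall m hm1 le_rfl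
        _ = 2 * chiOf p k := by
            rw [Finset.sum_const, smul_eq_mul, Nat.card_Icc]
            omega
    omega
  omega

end TwoBlocksAux

/-- if `χ¹_N + χ²_N ≤ N` but `χ¹_k + χ²_k > k` for some `k ∈ {2,…,N}`,
then `N` is even and both partitions equal `[2^{N/2}]`, i.e. `χ¹_k = χ²_k = ⌈k/2⌉`. -/
theorem two_sided_forces_two_blocks
    (N : ℕ) (hN : 2 ≤ N) (p₁ p₂ χ₁ χ₂ : ℕ → ℕ)
    (h1 : IsVanishingOrderSeq N p₁ χ₁) (hp1 : 2 ≤ p₁ 1)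
    (h2 : IsVanishingOrderSeq N p₂ χ₂) (hp2 : 2 ≤ p₂ 1)
    (hend : χ₁ N + χ₂ N ≤ N)
    (hex : ∃ k, 2 ≤ k ∧ k ≤ N ∧ k < χ₁ k + χ₂ k) :
    Even N ∧ ∀ k, 1 ≤ k → k ≤ N → χ₁ k = (k + 1) / 2 ∧ χ₂ k = (k + 1) / 2 := by
  obtain ⟨hpart1, hval1⟩ := h1
  obtain ⟨hpart2, hval2⟩ := h2
  obtain ⟨k, hk2, hkN, hk⟩ := hex
  rw [hval1 k (by omega) hkN, hval2 k (by omega) hkN] at hk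
  rw [hval1 N (by omega) le_rfl, hval2 N (by omega) le_rfl] at hend
  have hau := TwoBlocksAux.chi_ub hpart1 hp1 hN hk2 hkN
  have hbu := TwoBlocksAux.chi_ub hpart2 hp2 hN hk2 hkN
  have ha2 : 2 ≤ chiOf p₁ k := by omega
  have hb2 : 2 ≤ chiOf p₂ k := by omega
  obtain ⟨A, M₁, c, s₁, t₁, hA1, hA2, hA3, hA4, hs1, ht1, hc, hsk1, hlow1, hupp1, hst1⟩ :=
    TwoBlocksAux.side hN hpart1 hp1 hk2 hkN ha2
  obtain ⟨B, M₂, d, s₂, t₂, hB1, hB2, hB3, hB4, hs2, ht2, hd, hsk2, hlow2, hupp2, hst2⟩ :=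
    TwoBlocksAux.side hN hpart2 hp2 hk2 hkN hb2
  obtain ⟨K, hKk, hK1⟩ : ∃ K, k = K + 1 ∧ 1 ≤ K := ⟨k - 1, by omega, by omega⟩
  obtain ⟨Q, hQN, hQ1⟩ : ∃ Q, N = K + Q ∧ 1 ≤ Q := ⟨N - K, by omega, by omega⟩
  have hsK1 : s₁ ≤ K := by omega
  have hsK2 : s₂ ≤ K := by omega
  have f2 : Q ≤ M₁ * c := le_trans (by omega) hupp1
  have f4 : Q ≤ M₂ * d := le_trans (by omega) hupp2
  have f6 : K ≤ A + B := by omega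
  have cAK : A * c ≤ K := le_trans hlow1 hsK1
  have dBK : B * d ≤ K := le_trans hlow2 hsK2
  have e4 : M₁ + M₂ ≤ Q := by omega
  have e1 : Q * A ≤ M₁ * K := by
    calc Q * A ≤ (M₁ * c) * A := Nat.mul_le_mul f2 le_rfl
      _ = M₁ * (A * c) := by ring
      _ ≤ M₁ * K := Nat.mul_le_mul le_rfl cAK
  have e2 : Q * B ≤ M₂ * K := by
    calc Q * B ≤ (M₂ * d) * B := Nat.mul_le_mul f4 le_rfl
      _ = M₂ * (B * d) := by ring
      _ ≤ M₂ * K := Nat.mul_le_mul le_rfl dBK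
  have e5 : Q * K ≤ Q * (A + B) := Nat.mul_le_mul le_rfl f6
  have e3 : Q * (A + B) ≤ (M₁ + M₂) * K := by
    calc Q * (A + B) = Q * A + Q * B := by ring
      _ ≤ M₁ * K + M₂ * K := Nat.add_le_add e1 e2
      _ = (M₁ + M₂) * K := by ring
  have e6 : (M₁ + M₂) * K ≤ Q * K := Nat.mul_le_mul e4 le_rfl
  have h' : Q * (A + B) = Q * K := le_antisymm (le_trans e3 e6) e5
  have hABK : A + B = K := Nat.eq_of_mul_eq_mul_left (by omega) h'
  have hMM' : (M₁ + M₂) * K = Q * K := by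
    refine le_antisymm e6 ?_
    calc Q * K = Q * (A + B) := h'.symm
      _ ≤ (M₁ + M₂) * K := e3
  have hMMQ : M₁ + M₂ = Q := Nat.eq_of_mul_eq_mul_right (by omega) hMM'
  have hsum : Q * A + Q * B = M₁ * K + M₂ * K := by
    calc Q * A + Q * B = Q * (A + B) := by ring
      _ = Q * K := h'
      _ = (M₁ + M₂) * K := hMM'.symm
      _ = M₁ * K + M₂ * K := by ring
  have hQA : Q * A = M₁ * K := by linarith
  have hQB : Q * B = M₂ * K := by linarith
  -- extract per-partition equalities, side 1
  have hQMcA : Q * A = (M₁ * c) * A := by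
    refine le_antisymm (Nat.mul_le_mul f2 le_rfl) ?_
    calc (M₁ * c) * A = M₁ * (A * c) := by ring
      _ ≤ M₁ * K := Nat.mul_le_mul le_rfl cAK
      _ = Q * A := hQA.symm
  have hQ_Mc : Q = M₁ * c := Nat.eq_of_mul_eq_mul_right (by omega) hQMcA
  have hAcK : A * c = K := by
    refine Nat.eq_of_mul_eq_mul_left (show 0 < M₁ by omega) ?_
    calc M₁ * (A * c) = (M₁ * c) * A := by ring
      _ = Q * A := hQMcA.symm
      _ = M₁ * K := hQA
  -- side 2
  have hQMdB : Q * B = (M₂ * d) * B := by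
    refine le_antisymm (Nat.mul_le_mul f4 le_rfl) ?_
    calc (M₂ * d) * B = M₂ * (B * d) := by ring
      _ ≤ M₂ * K := Nat.mul_le_mul le_rfl dBK
      _ = Q * B := hQB.symm
  have hQ_Md : Q = M₂ * d := Nat.eq_of_mul_eq_mul_right (by omega) hQMdB
  have hBdK : B * d = K := by
    refine Nat.eq_of_mul_eq_mul_left (show 0 < M₂ by omega) ?_
    calc M₂ * (B * d) = (M₂ * d) * B := by ring
      _ = Q * B := hQMdB.symm
      _ = M₂ * K := hQB
  -- sums are tight
  have hs1K : s₁ = K := le_antisymm hsK1 (hAcK ▸ hlow1)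
  have hs2K : s₂ = K := le_antisymm hsK2 (hBdK ▸ hlow2)
  have ht1e : t₁ = M₁ * c := by rw [← hQ_Mc]; omega
  have ht2e : t₂ = M₂ * d := by rw [← hQ_Md]; omega
  -- all parts equal
  have hall1 : ∀ j, 1 ≤ j → j ≤ A + M₁ → p₁ j = c := by
    apply TwoBlocksAux.parts_const
    · intro j hj
      rw [Finset.mem_Icc] at hj
      rw [hc]
      exact TwoBlocksAux.parts_le hpart1.1 hj.1 (by omega)
    · intro j hj
      rw [Finset.mem_Ioc] at hj
      rw [hc]
      exact TwoBlocksAux.parts_le hpart1.1 (by omega) (by omega)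
    · rw [← hs1, hs1K, ← hAcK]
    · rw [← ht1, ht1e]
  have hall2 : ∀ j, 1 ≤ j → j ≤ B + M₂ → p₂ j = d := by
    apply TwoBlocksAux.parts_const
    · intro j hj
      rw [Finset.mem_Icc] at hj
      rw [hd]
      exact TwoBlocksAux.parts_le hpart2.1 hj.1 (by omega)
    · intro j hj
      rw [Finset.mem_Ioc] at hj
      rw [hd]
      exact TwoBlocksAux.parts_le hpart2.1 (by omega) (by omega)
    · rw [← hs2, hs2K, ← hBdK]
    · rw [← ht2, ht2e]
  have hc2 : 2 ≤ c := by
    have := hall1 1 le_rfl (by omega)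
    omega
  have hd2 : 2 ≤ d := by
    have := hall2 1 le_rfl (by omega)
    omega
  have hN1 : N = (A + M₁) * c := by
    calc N = K + Q := hQN
      _ = A * c + M₁ * c := by rw [← hAcK, hQ_Mc]
      _ = (A + M₁) * c := by ring
  have hN2 : N = (B + M₂) * d := by
    calc N = K + Q := hQN
      _ = B * d + M₂ * d := by rw [← hBdK, hQ_Md]
      _ = (B + M₂) * d := by ring
  have h2m1 : (A + M₁) * 2 ≤ N := by
    have h := Nat.mul_le_mul (le_refl (A + M₁)) hc2
    omega
  have h2m2 : (B + M₂) * 2 ≤ N := by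
    have h := Nat.mul_le_mul (le_refl (B + M₂)) hd2
    omega
  have hmm12 : (A + M₁) + (B + M₂) = N := by omega
  have hNe1 : N = 2 * (A + M₁) := by omega
  have hNe2 : N = 2 * (B + M₂) := by omega
  have hceq : c = 2 := by
    refine Nat.eq_of_mul_eq_mul_left (show 0 < A + M₁ by omega) ?_
    omega
  have hdeq : d = 2 := by
    refine Nat.eq_of_mul_eq_mul_left (show 0 < B + M₂ by omega) ?_
    omega
  refine ⟨⟨A + M₁, by omega⟩, ?_⟩
  intro k' hk1' hkN'
  rw [hval1 k' hk1' hkN', hval2 k' hk1' hkN']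
  constructor
  · exact TwoBlocksAux.chi_const_two hpart1 (by omega)
      (fun j hj1 hj2 => by rw [hall1 j hj1 hj2, hceq]) hNe1 hk1' hkN'
  · exact TwoBlocksAux.chi_const_two hpart2 (by omega)
      (fun j hj1 hj2 => by rw [hall2 j hj1 hj2, hdeq]) hNe2 hk1' hkN'
end

section
/- Let k ≥ 1 be an integer and define a ∘ b := 1 + max(0, a + b − k − 1) for integers a, b. Then for every nonempty list x₁, x₂, …, x_m of integers with 1 ≤ x_j ≤ k for all j, the left-iterated product satisfies ((x₁ ∘ x₂) ∘ ⋯) ∘ x_m = 1 + max(0, x₁ + x₂ + ⋯ + x_m − (m−1)k − 1). -/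
/-- The fusion operation on pole orders: `a ∘ b := 1 + max(0, a + b − k − 1)`. -/
def nodeOp (k a b : ℤ) : ℤ := 1 + max 0 (a + b - k - 1)

lemma sum_le_len_mul (k : ℤ) (ys : List ℤ) (h : ∀ y ∈ ys, 1 ≤ y ∧ y ≤ k) :
    ys.sum ≤ (ys.length : ℤ) * k := by
  induction ys with
  | nil => simp
  | cons a t ih =>
    have ha := h a (by simp)
    have ht := ih (fun y hy => h y (by simp [hy]))
    simp only [List.sum_cons, List.length_cons]
    push_cast
    nlinarith [ha.2]

/-- for a nonempty list `x₁, …, x_m` with `1 ≤ xⱼ ≤ k`, the left-iterated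
product satisfies `((x₁ ∘ x₂) ∘ ⋯) ∘ x_m = 1 + max(0, x₁ + ⋯ + x_m − (m−1)k − 1)`. -/
theorem nodeOp_foldl_eq
    (k : ℤ) (hk : 1 ≤ k) (x : ℤ) (xs : List ℤ)
    (hmem : ∀ y ∈ x :: xs, 1 ≤ y ∧ y ≤ k) :
    xs.foldl (nodeOp k) x =
      1 + max 0 ((x :: xs).sum - (((x :: xs).length : ℤ) - 1) * k - 1) := by
  induction xs generalizing x with
  | nil =>
    have hx := hmem x (by simp)
    simp only [List.foldl_nil, List.sum_cons, List.sum_nil, List.length_cons,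
      List.length_nil]
    rw [max_eq_right (by omega)]
    push_cast
    ring_nf
  | cons y ys ih =>
    have hx := hmem x (by simp)
    have hy := hmem y (by simp)
    have hS : ys.sum ≤ (ys.length : ℤ) * k :=
      sum_le_len_mul k ys (fun z hz => hmem z (by simp [hz]))
    have hnode : 1 ≤ nodeOp k x y ∧ nodeOp k x y ≤ k := by
      unfold nodeOp
      constructor
      · have := le_max_left (0:ℤ) (x + y - k - 1); omega
      · have h2 : x + y - k - 1 ≤ k - 1 := by omega
        have : max 0 (x + y - k - 1) ≤ k - 1 := max_le (by omega) h2
        omega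
    have ihh := ih (nodeOp k x y)
      (fun z hz => by
        rcases List.mem_cons.mp hz with h | h
        · exact h ▸ hnode
        · exact hmem z (by simp [h]))
    simp only [List.foldl_cons] at *
    rw [ihh]
    simp only [List.sum_cons, List.length_cons]
    unfold nodeOp
    push_cast
    rcases le_or_gt (x + y - k - 1) 0 with h | h
    · rw [max_eq_left h]
      have e1 : max 0 (1 + 0 + ys.sum - ((ys.length : ℤ) + 1 - 1) * k - 1) = 0 :=
        max_eq_left (by nlinarith)
      have e2 : max 0 (x + (y + ys.sum) - ((ys.length : ℤ) + 1 + 1 - 1) * k - 1) = 0 :=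
        max_eq_left (by nlinarith)
      rw [e1, e2]
    · rw [max_eq_right h.le]
      have e : 1 + (x + y - k - 1) + ys.sum - ((ys.length : ℤ) + 1 - 1) * k - 1
          = x + (y + ys.sum) - ((ys.length : ℤ) + 1 + 1 - 1) * k - 1 := by ring
      rw [e]
end

section
/- Let N ≥ 2, n ≥ 2, and let χ⁽¹⁾,…,χ⁽ⁿ⁾ be the vanishing-order sequences of n nonzero partitions of N. Then the nodal sequence satisfies χ_k := max(1, ∑_{i=1}^{n} χ⁽ⁱ⁾_k − (n−1)k) ≤ max(1, k − n) for every k ∈ {1,…,N}. (In particular, for n = 2 the nodal orbit is never smaller than the orbit [3, 1^{N−3}], whose vanishing orders are max(1, k−2).) -/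
lemma part_mono {N : ℕ} {p : ℕ → ℕ} (hp : IsPartitionOf N p) :
    ∀ i j, 1 ≤ i → i ≤ j → p j ≤ p i := by
  intro i j hi hij
  induction j, hij using Nat.le_induction with
  | base => exact le_refl _
  | succ j hj ih => exact le_trans (hp.1 j (le_trans hi hj)) ih

lemma prefix_ge {N : ℕ} {p : ℕ → ℕ} (hN : 2 ≤ N) (hp : IsPartitionOf N p)
    (h2 : 2 ≤ p 1) : ∀ i, 1 ≤ i → min N (i + 1) ≤ ∑ j ∈ Finset.Icc 1 i, p j := by
  intro i hi
  induction i, hi using Nat.le_induction with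
  | base =>
    have : ∑ j ∈ Finset.Icc 1 1, p j = p 1 := by simp
    omega
  | succ i hi ih =>
    by_cases hiN : N ≤ i
    · have hsub : Finset.Icc 1 N ⊆ Finset.Icc 1 (i + 1) :=
        Finset.Icc_subset_Icc_right (by omega)
      have := Finset.sum_le_sum_of_subset (f := p) hsub
      have hS := hp.2.1
      omega
    · push_neg at hiN
      rcases Nat.eq_zero_or_pos (p (i + 1)) with h0 | h1
      · have hall : ∀ j, i + 1 ≤ j → p j = 0 := by
          intro j hj
          have := part_mono hp (i + 1) j (by omega) hj
          omega
        have heq : ∑ j ∈ Finset.Icc 1 (i + 1), p j = ∑ j ∈ Finset.Icc 1 N, p j := by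
          apply Finset.sum_subset (Finset.Icc_subset_Icc_right (by omega))
          intro x hx hx'
          simp only [Finset.mem_Icc] at hx hx'
          exact hall x (by omega)
        have hS := hp.2.1
        omega
      · have hstep : ∑ j ∈ Finset.Icc 1 (i + 1), p j
            = (∑ j ∈ Finset.Icc 1 i, p j) + p (i + 1) :=
          Finset.sum_Icc_succ_top (by omega) p
        omega

lemma chi_le {N : ℕ} {p : ℕ → ℕ} (hN : 2 ≤ N) (hp : IsPartitionOf N p)
    (h2 : 2 ≤ p 1) {k : ℕ} (hk : 1 ≤ k) (hkN : k ≤ N) :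
    chiOf p k ≤ max 1 (k - 1) := by
  rcases Nat.lt_or_ge k 2 with hk2 | hk2
  · have hk1 : k = 1 := by omega
    subst hk1
    have h1 : 1 ∈ {i | 1 ≤ i ∧ 1 ≤ ∑ j ∈ Finset.Icc 1 i, p j} := by
      constructor
      · exact le_refl 1
      · have : ∑ j ∈ Finset.Icc 1 1, p j = p 1 := by simp
        omega
    exact (Nat.sInf_le h1).trans (by norm_num)
  · have hmem : k - 1 ∈ {i | 1 ≤ i ∧ k ≤ ∑ j ∈ Finset.Icc 1 i, p j} := by
      constructor
      · omega
      · have := prefix_ge hN hp h2 (k - 1) (by omega)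
        have hrw : k - 1 + 1 = k := by omega
        rw [hrw] at this
        omega
    have hle : chiOf p k ≤ k - 1 := Nat.sInf_le hmem
    omega

/-- the nodal sequence is bounded above by `max(1, k − n)`; in particular,
for `n = 2` the nodal orbit is never smaller than `[3, 1^{N−3}]`. -/
theorem nodal_sequence_upper_bound
    (N n : ℕ) (hN : 2 ≤ N) (hn : 2 ≤ n)
    (p χ : Fin n → ℕ → ℕ)
    (h : ∀ i, IsVanishingOrderSeq N (p i) (χ i) ∧ 2 ≤ p i 1) :
    ∀ k, 1 ≤ k → k ≤ N →
      max 1 ((∑ i, (χ i k : ℤ)) - ((n : ℤ) - 1) * (k : ℤ)) ≤ max 1 ((k : ℤ) - (n : ℤ)) := by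
  intro k hk hkN
  have key : ∀ i, (χ i k : ℤ) ≤ (max 1 (k - 1) : ℕ) := by
    intro i
    have hχ := (h i).1.2 k hk hkN
    have := chi_le hN (h i).1.1 (h i).2 hk hkN
    rw [hχ]
    exact_mod_cast this
  have hsum : (∑ i, (χ i k : ℤ)) ≤ (n : ℤ) * ((max 1 (k - 1) : ℕ) : ℤ) := by
    calc (∑ i, (χ i k : ℤ)) ≤ ∑ _i : Fin n, ((max 1 (k - 1) : ℕ) : ℤ) :=
          Finset.sum_le_sum fun i _ => key i
      _ = (n : ℤ) * ((max 1 (k - 1) : ℕ) : ℤ) := by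
          simp [Finset.sum_const, mul_comm]
  apply max_le
  · exact le_max_left _ _
  · rcases Nat.lt_or_ge k 2 with hk2 | hk2
    · have hk1 : k = 1 := by omega
      subst hk1
      have hm : (max 1 (1 - 1) : ℕ) = 1 := by norm_num
      rw [hm] at hsum
      have : (1 : ℤ) ≤ max 1 ((1 : ℤ) - (n : ℤ)) := le_max_left _ _
      push_cast at hsum ⊢
      nlinarith
    · have hm : ((max 1 (k - 1) : ℕ) : ℤ) = (k : ℤ) - 1 := by
        have : (max 1 (k - 1) : ℕ) = k - 1 := by omega
        rw [this]
        omega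
      rw [hm] at hsum
      have h1 : (∑ i, (χ i k : ℤ)) - ((n : ℤ) - 1) * (k : ℤ) ≤ (k : ℤ) - (n : ℤ) := by
        nlinarith
      exact le_trans h1 (le_max_right _ _)
end

section
/- Let p ≥ 1 and k = 2p. Suppose m : ℤ → ℕ is a finitely supported function such that for every integer l, 2·∑_{i∈ℤ} m_i · max(0, i − l + 1) equals: k² + (3−4l)k + 6(l−1) if l ≤ 0; (k−2l+2)(k−2l+1) if 0 < 2l ≤ k; and 0 if 2l > k. Then m_p = 1, m_i = 4 for all 1 ≤ i ≤ p−1, and m_i = 0 for all other i ∈ ℤ. -/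
/-- Right-hand side function for the even case. -/
def evenRHS (p : ℕ) (l : ℤ) : ℤ :=
  if l ≤ 0 then
    ((2 * p : ℤ)) ^ 2 + (3 - 4 * l) * (2 * p : ℤ) + 6 * (l - 1)
  else if 2 * l ≤ (2 * p : ℤ) then
    ((2 * p : ℤ) - 2 * l + 2) * ((2 * p : ℤ) - 2 * l + 1)
  else 0

/-- the even case `k = 2p`. If the finitely supported multiplicities
`m : ℤ →₀ ℕ` satisfy, for every `l ∈ ℤ`,
`2·∑ᵢ mᵢ·max(0, i−l+1) = k² + (3−4l)k + 6(l−1)` for `l ≤ 0`,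
`= (k−2l+2)(k−2l+1)` for `0 < 2l ≤ k`, and `= 0` for `2l > k`,
then `m_p = 1`, `m_i = 4` for `1 ≤ i ≤ p−1`, and `m_i = 0` otherwise. -/
theorem direct_image_decomposition_even
    (p : ℕ) (hp : 1 ≤ p) (m : ℤ →₀ ℕ)
    (hm : ∀ l : ℤ,
      2 * ∑ i ∈ m.support, (m i : ℤ) * max 0 (i - l + 1) =
        if l ≤ 0 then
          ((2 * p : ℤ)) ^ 2 + (3 - 4 * l) * (2 * p : ℤ) + 6 * (l - 1)
        else if 2 * l ≤ (2 * p : ℤ) then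
          ((2 * p : ℤ) - 2 * l + 2) * ((2 * p : ℤ) - 2 * l + 1)
        else 0) :
    m (p : ℤ) = 1 ∧
    (∀ i : ℤ, 1 ≤ i → i ≤ (p : ℤ) - 1 → m i = 4) ∧
    (∀ i : ℤ, i ≠ (p : ℤ) → ¬(1 ≤ i ∧ i ≤ (p : ℤ) - 1) → m i = 0) := by
  have hm' : ∀ l : ℤ,
      2 * ∑ i ∈ m.support, (m i : ℤ) * max 0 (i - l + 1) = evenRHS p l := by
    intro l; rw [evenRHS]; exact hm l
  -- second difference of the sum gives m l
  have hS : ∀ l : ℤ,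
      (∑ i ∈ m.support, (m i : ℤ) * max 0 (i - l + 1))
        - 2 * (∑ i ∈ m.support, (m i : ℤ) * max 0 (i - (l + 1) + 1))
        + (∑ i ∈ m.support, (m i : ℤ) * max 0 (i - (l + 2) + 1)) = (m l : ℤ) := by
    intro l
    have hterm : ∀ i ∈ m.support,
        (m i : ℤ) * max 0 (i - l + 1) - 2 * ((m i : ℤ) * max 0 (i - (l + 1) + 1))
          + (m i : ℤ) * max 0 (i - (l + 2) + 1) = if i = l then (m i : ℤ) else 0 := by
      intro i _
      rcases lt_trichotomy i l with h | h | h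
      · rw [if_neg (by omega), max_eq_left (by omega), max_eq_left (by omega),
          max_eq_left (by omega)]
        ring
      · subst h
        rw [if_pos rfl, show i - i + 1 = (1 : ℤ) by ring,
          show i - (i + 1) + 1 = (0 : ℤ) by ring,
          show i - (i + 2) + 1 = (-1 : ℤ) by ring]
        norm_num
      · rw [if_neg (by omega), max_eq_right (by omega), max_eq_right (by omega),
          max_eq_right (by omega)]
        ring
    rw [Finset.mul_sum, ← Finset.sum_sub_distrib, ← Finset.sum_add_distrib,
      Finset.sum_congr rfl hterm, Finset.sum_ite_eq' m.support l (fun i => (m i : ℤ))]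
    split_ifs with h
    · rfl
    · simp [Finsupp.notMem_support_iff.mp h]
  have key : ∀ l : ℤ, 2 * (m l : ℤ) = evenRHS p l - 2 * evenRHS p (l + 1) + evenRHS p (l + 2) := by
    intro l
    have h0 := hm' l
    have h1 := hm' (l + 1)
    have h2 := hm' (l + 2)
    have hs := hS l
    linarith
  -- m l = 0 for l ≤ 0
  have hneg : ∀ l : ℤ, l ≤ 0 → m l = 0 := by
    intro l hl
    have k0 := key l
    unfold evenRHS at k0
    split_ifs at k0 <;>
      first
        | omega
        | (have h2 : (2 : ℤ) * (m l : ℤ) = 0 := by linear_combination k0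
           omega)
        | (obtain rfl : l = -1 := by omega
           have h2 : (2 : ℤ) * (m (-1) : ℤ) = 0 := by linear_combination k0
           omega)
        | (obtain rfl : l = 0 := by omega
           first
             | (have h2 : (2 : ℤ) * (m 0 : ℤ) = 0 := by linear_combination k0
                omega)
             | (obtain rfl : p = 1 := by omega
                norm_num at k0
                omega))
  -- m l = 4 for 1 ≤ l ≤ p - 1
  have hmid : ∀ l : ℤ, 1 ≤ l → l ≤ (p : ℤ) - 1 → m l = 4 := by
    intro l h1l hlp
    have k0 := key l
    unfold evenRHS at k0
    split_ifs at k0 <;>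
      first
        | omega
        | (have h2 : (2 : ℤ) * (m l : ℤ) = 8 := by linear_combination k0
           omega)
        | (obtain rfl : l = (p : ℤ) - 1 := by omega
           have h2 : (2 : ℤ) * (m ((p : ℤ) - 1) : ℤ) = 8 := by linear_combination k0
           omega)
  -- m p = 1
  have htop : m (p : ℤ) = 1 := by
    have k0 := key (p : ℤ)
    unfold evenRHS at k0
    split_ifs at k0 <;>
      first
        | omega
        | (have h2 : (2 : ℤ) * (m (p : ℤ) : ℤ) = 2 := by linear_combination k0
           omega)
  -- m l = 0 for l ≥ p + 1
  have hhigh : ∀ l : ℤ, (p : ℤ) + 1 ≤ l → m l = 0 := by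
    intro l hl
    have k0 := key l
    unfold evenRHS at k0
    split_ifs at k0 <;>
      first
        | omega
        | (have h2 : (2 : ℤ) * (m l : ℤ) = 0 := by linear_combination k0
           omega)
  refine ⟨htop, hmid, ?_⟩
  intro i hne hr
  rcases le_or_gt i 0 with h | h
  · exact hneg i h
  · exact hhigh i (by omega)
end

section
/- Let p ≥ 1 and k = 2p+1. Suppose m : ℤ → ℕ is a finitely supported function such that for every integer l, 2·∑_{i∈ℤ} m_i · max(0, i − l + 1) equals: k² + (3−4l)k + 6(l−1) if l ≤ 0; (k−2l+2)(k−2l+1) if 0 < 2l ≤ k; and 0 if 2l > k. Then m_p = 3, m_i = 4 for all 1 ≤ i ≤ p−1, and m_i = 0 for all other i ∈ ℤ. -/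
/-- the odd case `k = 2p+1`. If the finitely supported multiplicities
`m : ℤ →₀ ℕ` satisfy, for every `l ∈ ℤ`,
`2·∑ᵢ mᵢ·max(0, i−l+1) = k² + (3−4l)k + 6(l−1)` for `l ≤ 0`,
`= (k−2l+2)(k−2l+1)` for `0 < 2l ≤ k`, and `= 0` for `2l > k`,
then `m_p = 3`, `m_i = 4` for `1 ≤ i ≤ p−1`, and `m_i = 0` otherwise. -/
theorem direct_image_decomposition_odd
    (p : ℕ) (hp : 1 ≤ p) (m : ℤ →₀ ℕ)
    (hm : ∀ l : ℤ,
      2 * ∑ i ∈ m.support, (m i : ℤ) * max 0 (i - l + 1) =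
        if l ≤ 0 then
          ((2 * p + 1 : ℤ)) ^ 2 + (3 - 4 * l) * (2 * p + 1 : ℤ) + 6 * (l - 1)
        else if 2 * l ≤ (2 * p + 1 : ℤ) then
          ((2 * p + 1 : ℤ) - 2 * l + 2) * ((2 * p + 1 : ℤ) - 2 * l + 1)
        else 0) :
    m (p : ℤ) = 3 ∧
    (∀ i : ℤ, 1 ≤ i → i ≤ (p : ℤ) - 1 → m i = 4) ∧
    (∀ i : ℤ, i ≠ (p : ℤ) → ¬(1 ≤ i ∧ i ≤ (p : ℤ) - 1) → m i = 0) := by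
  set R : ℤ → ℤ := fun l =>
    if l ≤ 0 then
      ((2 * p + 1 : ℤ)) ^ 2 + (3 - 4 * l) * (2 * p + 1 : ℤ) + 6 * (l - 1)
    else if 2 * l ≤ (2 * p + 1 : ℤ) then
      ((2 * p + 1 : ℤ) - 2 * l + 2) * ((2 * p + 1 : ℤ) - 2 * l + 1)
    else 0 with hRdef
  have hR : ∀ l : ℤ, 2 * ∑ i ∈ m.support, (m i : ℤ) * max 0 (i - l + 1) = R l := hm
  -- second difference extracts pointwise values
  have hsum : ∀ l : ℤ,
      (∑ i ∈ m.support, (m i : ℤ) * max 0 (i - l + 1))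
      - 2 * (∑ i ∈ m.support, (m i : ℤ) * max 0 (i - (l + 1) + 1))
      + (∑ i ∈ m.support, (m i : ℤ) * max 0 (i - (l + 2) + 1)) = m l := by
    intro l
    rw [Finset.mul_sum, ← Finset.sum_sub_distrib, ← Finset.sum_add_distrib]
    have hterm : ∀ i ∈ m.support,
        (m i : ℤ) * max 0 (i - l + 1) - 2 * ((m i : ℤ) * max 0 (i - (l + 1) + 1))
          + (m i : ℤ) * max 0 (i - (l + 2) + 1)
        = if i = l then (m i : ℤ) else 0 := by
      intro i _
      rcases lt_trichotomy i l with h | h | h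
      · rw [if_neg h.ne, max_eq_left (by omega), max_eq_left (by omega),
          max_eq_left (by omega)]
        ring
      · subst h
        rw [if_pos rfl, max_eq_right (by omega), max_eq_left (by omega),
          max_eq_left (by omega)]
        ring
      · rw [if_neg h.ne', max_eq_right (by omega), max_eq_right (by omega),
          max_eq_right (by omega)]
        ring
    rw [Finset.sum_congr rfl hterm, Finset.sum_ite_eq' m.support l (fun i => (m i : ℤ))]
    by_cases hl : l ∈ m.support
    · rw [if_pos hl]
    · rw [if_neg hl, Finsupp.notMem_support_iff.mp hl]
      simp
  have key : ∀ l : ℤ, 2 * (m l : ℤ) = R l - 2 * R (l + 1) + R (l + 2) := by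
    intro l
    have h0 := hR l
    have h1 := hR (l + 1)
    have h2 := hR (l + 2)
    have hs := hsum l
    linarith
  -- evaluation of R in the various ranges
  have hk1 : (1 : ℤ) ≤ (p : ℤ) := by exact_mod_cast hp
  have Rmid : ∀ l : ℤ, 1 ≤ l → l ≤ (p : ℤ) + 1 →
      R l = ((2 * p + 1 : ℤ) - 2 * l + 2) * ((2 * p + 1 : ℤ) - 2 * l + 1) := by
    intro l h1 h2
    rcases le_or_gt l (p : ℤ) with h | h
    · rw [hRdef]; simp only
      rw [if_neg (by omega), if_pos (by omega)]
    · have hl : l = (p : ℤ) + 1 := by omega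
      rw [hRdef]; simp only
      rw [if_neg (by omega), if_neg (by omega), hl]
      ring
  have Rhigh : ∀ l : ℤ, (p : ℤ) + 1 ≤ l → R l = 0 := by
    intro l h1
    rcases eq_or_lt_of_le h1 with h | h
    · rw [Rmid l (by omega) (by omega), ← h]; ring
    · rw [hRdef]; simp only
      rw [if_neg (by omega), if_neg (by omega)]
  have Rlow : ∀ l : ℤ, l ≤ 2 →
      R l = ((2 * p + 1 : ℤ)) ^ 2 + (3 - 4 * l) * (2 * p + 1 : ℤ) + 6 * (l - 1) := by
    intro l h2
    rcases le_or_gt l 0 with h | h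
    · rw [hRdef]; simp only; rw [if_pos h]
    · rcases le_or_gt l ((p : ℤ) + 1) with h' | h'
      · rw [Rmid l (by omega) h']
        interval_cases l <;> ring
      · -- l = 2 and p + 1 < 2, impossible since p ≥ 1 unless p = 0
        omega
  refine ⟨?_, ?_, ?_⟩
  · have h := key (p : ℤ)
    rw [Rmid (p : ℤ) hk1 (by omega), Rhigh ((p : ℤ) + 1) (by omega),
      Rhigh ((p : ℤ) + 2) (by omega)] at h
    have : ((2 * p + 1 : ℤ) - 2 * (p : ℤ) + 2) * ((2 * p + 1 : ℤ) - 2 * (p : ℤ) + 1) = 6 := by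
      ring
    omega
  · intro i h1 h2
    have h := key i
    rw [Rmid i h1 (by omega), Rmid (i + 1) (by omega) (by omega),
      Rmid (i + 2) (by omega) (by omega)] at h
    have : ((2 * p + 1 : ℤ) - 2 * i + 2) * ((2 * p + 1 : ℤ) - 2 * i + 1)
        - 2 * (((2 * p + 1 : ℤ) - 2 * (i + 1) + 2) * ((2 * p + 1 : ℤ) - 2 * (i + 1) + 1))
        + ((2 * p + 1 : ℤ) - 2 * (i + 2) + 2) * ((2 * p + 1 : ℤ) - 2 * (i + 2) + 1) = 8 := by
      ring
    omega
  · intro i hne hmid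
    have h := key i
    rcases le_or_gt i 0 with hi | hi
    · rw [Rlow i (by omega), Rlow (i + 1) (by omega), Rlow (i + 2) (by omega)] at h
      have : (((2 * p + 1 : ℤ)) ^ 2 + (3 - 4 * i) * (2 * p + 1 : ℤ) + 6 * (i - 1))
          - 2 * (((2 * p + 1 : ℤ)) ^ 2 + (3 - 4 * (i + 1)) * (2 * p + 1 : ℤ) + 6 * ((i + 1) - 1))
          + (((2 * p + 1 : ℤ)) ^ 2 + (3 - 4 * (i + 2)) * (2 * p + 1 : ℤ) + 6 * ((i + 2) - 1)) = 0 := by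
        ring
      omega
    · have hge : (p : ℤ) + 1 ≤ i := by omega
      rw [Rhigh i hge, Rhigh (i + 1) (by omega), Rhigh (i + 2) (by omega)] at h
      omega
end
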